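/- arXiv:2203.10787 — 5 statements merged into one kernel-verified Lean document; each statement's English description precedes it below -/
import Mathlib

section
/- An increasing càdlàg function Λ : [0,∞) → [0,1] with Λ_{0-} = 0 is a solution of the elastic feedback problem if and only if it is a solution of the absorbing feedback problem with initial condition Z_{0-} = X_{0-} + ξ. -/
open MeasureTheory ProbabilityTheory Filter Topology Set

noncomputable section

/-- Running minimum of a path over the time interval `[0, t]`. -/
def runMin (Y : ℝ → ℝ) (t : ℝ) : ℝ := sInf (Y '' Set.Icc 0 t)

/-- The reflection term `L_t = max(0, - inf_{0 ≤ s ≤ t} Y_s)` of the Skorokhod problem. -/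
def reflTerm (Y : ℝ → ℝ) (t : ℝ) : ℝ := max 0 (-(runMin Y t))

/-- First time `t ≥ 0` at which `L_t ≥ x`, valued in `EReal` with `inf ∅ = ⊤`. -/
def hitTime (L : ℝ → ℝ) (x : ℝ) : EReal :=
  sInf ((fun t : ℝ => (t : EReal)) '' {t : ℝ | 0 ≤ t ∧ x ≤ L t})

/-- First time `t ≥ 0` at which `Y_t ≤ 0`, valued in `EReal` with `inf ∅ = ⊤`. -/
def hitZeroTime (Y : ℝ → ℝ) : EReal :=
  sInf ((fun t : ℝ => (t : EReal)) '' {t : ℝ | 0 ≤ t ∧ Y t ≤ 0})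

/-- An increasing càdlàg function `Λ : [0,∞) → [0,1]` with `Λ_{0-} = 0`, encoded as a
function on `ℝ` vanishing on negatives. -/
def IsLossFn (Λ : ℝ → ℝ) : Prop :=
  Monotone Λ ∧ (∀ t : ℝ, ContinuousWithinAt Λ (Set.Ici t) t) ∧
    (∀ t : ℝ, t < 0 → Λ t = 0) ∧ ∀ t : ℝ, Λ t ≤ 1

/-- A standard Brownian motion: starts at `0`, continuous paths, Gaussian increments
`N(0, t-s)`, and independent increments. -/
def IsStandardBM {Ω : Type*} [MeasurableSpace Ω] (P : Measure Ω) (B : ℝ → Ω → ℝ) : Prop :=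
  (∀ ω, B 0 ω = 0) ∧ (∀ ω, Continuous fun t => B t ω) ∧ (∀ t, Measurable (B t)) ∧
    (∀ s t : ℝ, 0 ≤ s → s ≤ t →
      Measure.map (fun ω => B t ω - B s ω) P = gaussianReal 0 (Real.toNNReal (t - s))) ∧
    ∀ (n : ℕ) (t : ℕ → ℝ), Monotone t → 0 ≤ t 0 →
      iIndepFun (fun (i : Fin n) ω => B (t (i + 1)) ω - B (t i) ω) P

/-- The elastic stopping time `τ = inf{t ≥ 0 : L_t ≥ ξ}` for the path `Y_s = X_{0-} + B_s − αΛ_s`. -/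
def elasticTau {Ω : Type*} (B : ℝ → Ω → ℝ) (X0 ξ : Ω → ℝ) (α : ℝ) (Λ : ℝ → ℝ) (ω : Ω) : EReal :=
  hitTime (reflTerm (fun s => X0 ω + B s ω - α * Λ s)) (ξ ω)

/-- `Λ` solves the elastic feedback problem: `Λ` is a loss function and `Λ_t = P(τ ≤ t)` for `t ≥ 0`. -/
def IsElasticSol {Ω : Type*} [MeasurableSpace Ω] (P : Measure Ω) (B : ℝ → Ω → ℝ)
    (X0 ξ : Ω → ℝ) (α : ℝ) (Λ : ℝ → ℝ) : Prop :=
  IsLossFn Λ ∧ ∀ t : ℝ, 0 ≤ t → Λ t = (P {ω | elasticTau B X0 ξ α Λ ω ≤ (t : EReal)}).toReal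

/-- The absorbing stopping time `τᵃ = inf{t ≥ 0 : Z_{0-} + B_t − αΛ_t ≤ 0}`. -/
def absorbTau {Ω : Type*} (B : ℝ → Ω → ℝ) (Z0 : Ω → ℝ) (α : ℝ) (Λ : ℝ → ℝ) (ω : Ω) : EReal :=
  hitZeroTime (fun s => Z0 ω + B s ω - α * Λ s)

/-- `Λ` solves the absorbing feedback problem with initial condition `Z0`. -/
def IsAbsorbingSol {Ω : Type*} [MeasurableSpace Ω] (P : Measure Ω) (B : ℝ → Ω → ℝ)
    (Z0 : Ω → ℝ) (α : ℝ) (Λ : ℝ → ℝ) : Prop :=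
  IsLossFn Λ ∧ ∀ t : ℝ, 0 ≤ t → Λ t = (P {ω | absorbTau B Z0 α Λ ω ≤ (t : EReal)}).toReal

/-- Physical solution of the elastic feedback problem: the jump condition
`ΔΛ_t = inf{x ≥ 0 : P(t < τ, 0 < X_{0-} + ξ + B_t − αΛ_{t−} < αx) < x}`. -/
def IsPhysicalElasticSol {Ω : Type*} [MeasurableSpace Ω] (P : Measure Ω) (B : ℝ → Ω → ℝ)
    (X0 ξ : Ω → ℝ) (α : ℝ) (Λ : ℝ → ℝ) : Prop :=
  IsElasticSol P B X0 ξ α Λ ∧ ∀ t : ℝ, 0 ≤ t →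
    Λ t - Function.leftLim Λ t =
      sInf {x : ℝ | 0 ≤ x ∧
        (P {ω | (t : EReal) < elasticTau B X0 ξ α Λ ω ∧
          0 < X0 ω + ξ ω + B t ω - α * Function.leftLim Λ t ∧
          X0 ω + ξ ω + B t ω - α * Function.leftLim Λ t < α * x}).toReal < x}

/-- `Λ` is the minimal solution of the elastic feedback problem. -/
def IsMinimalElasticSol {Ω : Type*} [MeasurableSpace Ω] (P : Measure Ω) (B : ℝ → Ω → ℝ)
    (X0 ξ : Ω → ℝ) (α : ℝ) (Λ : ℝ → ℝ) : Prop :=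
  IsElasticSol P B X0 ξ α Λ ∧
    ∀ Λ' : ℝ → ℝ, IsElasticSol P B X0 ξ α Λ' → ∀ t : ℝ, 0 ≤ t → Λ t ≤ Λ' t

/-- `ξ` is exponentially distributed with rate `κ`: `P(ξ > x) = e^{-κx}` for `x ≥ 0`. -/
def IsExponential {Ω : Type*} [MeasurableSpace Ω] (P : Measure Ω) (κ : ℝ) (ξ : Ω → ℝ) : Prop :=
  Measurable ξ ∧ ∀ x : ℝ, 0 ≤ x → P {ω | x < ξ ω} = ENNReal.ofReal (Real.exp (-κ * x))

/-- `X0` has a bounded density `f` which changes monotonicity at most finitely often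
on every compact interval. -/
def HasNiceDensity {Ω : Type*} [MeasurableSpace Ω] (P : Measure Ω) (X0 : Ω → ℝ) (f : ℝ → ℝ) : Prop :=
  (∀ x, 0 ≤ f x) ∧ (∃ C : ℝ, ∀ x, f x ≤ C) ∧ Measurable f ∧
    Measure.map X0 P = MeasureTheory.volume.withDensity (fun x => ENNReal.ofReal (f x)) ∧
    ∀ a b : ℝ, a ≤ b → ∃ (n : ℕ) (t : Fin (n + 1) → ℝ), Monotone t ∧ t 0 = a ∧ t (Fin.last n) = b ∧
      ∀ i : Fin n, MonotoneOn f (Set.Icc (t i.castSucc) (t i.succ)) ∨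
        AntitoneOn f (Set.Icc (t i.castSucc) (t i.succ))


-- LSC attains min on compact
lemma lsc_exists_min {f : ℝ → ℝ} (hf : LowerSemicontinuous f) {K : Set ℝ}
    (hK : IsCompact K) (hne : K.Nonempty) : ∃ x ∈ K, ∀ y ∈ K, f x ≤ f y := by
  haveI : Nonempty K := hne.to_subtype
  obtain ⟨z, hz⟩ := IsCompact.nonempty_iInter_of_directed_nonempty_isCompact_isClosed
    (fun x : K => K ∩ f ⁻¹' Iic (f x))
    (fun x y => by
      rcases le_total (f x) (f y) with h | h
      · exact ⟨x, subset_rfl,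
          inter_subset_inter_right _ (preimage_mono (Iic_subset_Iic.2 h))⟩
      · exact ⟨y, inter_subset_inter_right _ (preimage_mono (Iic_subset_Iic.2 h)),
          subset_rfl⟩)
    (fun x => ⟨x, x.2, by simp⟩)
    (fun x => hK.inter_right (hf.isClosed_preimage _))
    (fun x => hK.isClosed.inter (hf.isClosed_preimage _))
  simp only [mem_iInter, mem_inter_iff, mem_preimage, mem_Iic] at hz
  exact ⟨z, (hz ⟨_, hne.some_mem⟩).1, fun y hy => (hz ⟨y, hy⟩).2⟩

lemma IsLossFn.usc {Λ : ℝ → ℝ} (h : IsLossFn Λ) : UpperSemicontinuous Λ := by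
  intro x y hy
  have h1 : ∀ᶠ s in 𝓝[Ici x] x, Λ s < y := (h.2.1 x).eventually_lt_const hy
  rw [eventually_nhdsWithin_iff] at h1
  filter_upwards [h1] with s hs
  by_cases hxs : x ≤ s
  · exact hs hxs
  · exact lt_of_le_of_lt (h.1 (le_of_not_ge hxs)) hy

lemma Y_lsc {Λ : ℝ → ℝ} (h : IsLossFn Λ) {g : ℝ → ℝ} (hg : Continuous g) {α : ℝ}
    (hα : 0 < α) : LowerSemicontinuous fun s => g s - α * Λ s := by
  intro x y hy
  simp only at hy ⊢
  set ε := (g x - α * Λ x - y) / 2 with hεdef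
  have hε : 0 < ε := by simp only [hεdef]; linarith
  have h1 : ∀ᶠ s in 𝓝 x, Λ s < Λ x + ε / α :=
    h.usc x (Λ x + ε / α) (by have := div_pos hε hα; linarith)
  have h2 : ∀ᶠ s in 𝓝 x, |g s - g x| < ε :=
    (hg.tendsto x).eventually (eventually_abs_sub_lt (g x) hε)
  filter_upwards [h1, h2] with s hs1 hs2
  have hm : α * Λ s < α * Λ x + ε := by
    have := mul_lt_mul_of_pos_left hs1 hα
    rwa [mul_add, mul_div_cancel₀ _ hα.ne'] at this
  have := abs_lt.1 hs2
  linarith [this.1]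

lemma Y_rightCont {Λ : ℝ → ℝ} (h : IsLossFn Λ) {g : ℝ → ℝ} (hg : Continuous g) (α t : ℝ) :
    ContinuousWithinAt (fun s => g s - α * Λ s) (Ici t) t :=
  hg.continuousWithinAt.sub ((h.2.1 t).const_mul α)

lemma runMin_attained {Y : ℝ → ℝ} (hY : LowerSemicontinuous Y) {t : ℝ} (ht : 0 ≤ t) :
    ∃ s ∈ Icc 0 t, Y s = runMin Y t ∧ ∀ u ∈ Icc (0:ℝ) t, Y s ≤ Y u := by
  obtain ⟨s, hs, hmin⟩ := lsc_exists_min hY isCompact_Icc ⟨0, le_refl 0, ht⟩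
  refine ⟨s, hs, ?_, hmin⟩
  refine le_antisymm ?_ (csInf_le ⟨Y s, ?_⟩ (mem_image_of_mem Y hs))
  · exact le_csInf ⟨Y s, mem_image_of_mem Y hs⟩ (by rintro _ ⟨u, hu, rfl⟩; exact hmin u hu)
  · rintro _ ⟨u, hu, rfl⟩; exact hmin u hu

lemma runMin_bddBelow {Y : ℝ → ℝ} (hY : LowerSemicontinuous Y) {t : ℝ} (ht : 0 ≤ t) :
    BddBelow (Y '' Icc 0 t) := by
  obtain ⟨s, _, _, hmin⟩ := runMin_attained hY ht
  exact ⟨Y s, by rintro _ ⟨u, hu, rfl⟩; exact hmin u hu⟩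

lemma runMin_le {Y : ℝ → ℝ} (hY : LowerSemicontinuous Y) {t s : ℝ} (ht : 0 ≤ t)
    (hs : s ∈ Icc (0:ℝ) t) : runMin Y t ≤ Y s :=
  csInf_le (runMin_bddBelow hY ht) (mem_image_of_mem Y hs)

lemma runMin_anti {Y : ℝ → ℝ} (hY : LowerSemicontinuous Y) {s t : ℝ} (hs : 0 ≤ s)
    (hst : s ≤ t) : runMin Y t ≤ runMin Y s :=
  csInf_le_csInf (runMin_bddBelow hY (hs.trans hst)) ⟨Y s, mem_image_of_mem Y ⟨hs, le_refl s⟩⟩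
    (image_mono (f := Y) (Icc_subset_Icc le_rfl hst))

lemma runMin_rightCont {Y : ℝ → ℝ} (hY : LowerSemicontinuous Y)
    (hYr : ∀ u, ContinuousWithinAt Y (Ici u) u) {t : ℝ} (ht : 0 ≤ t) :
    ContinuousWithinAt (runMin Y) (Ici t) t := by
  rw [Metric.continuousWithinAt_iff]
  intro ε hε
  have hY2 := Metric.continuousWithinAt_iff.1 (hYr t) (ε / 2) (by linarith)
  obtain ⟨δ, hδ, hδ2⟩ := hY2
  refine ⟨δ, hδ, fun t' ht' hd => ?_⟩
  have htt' : t ≤ t' := ht'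
  have hub : runMin Y t' ≤ runMin Y t := runMin_anti hY ht htt'
  have hlb : runMin Y t - ε / 2 ≤ runMin Y t' := by
    refine le_csInf ⟨Y t', mem_image_of_mem Y ⟨ht.trans htt', le_rfl⟩⟩ ?_
    rintro _ ⟨u, hu, rfl⟩
    by_cases hut : u ≤ t
    · have := runMin_le hY ht ⟨hu.1, hut⟩; linarith
    · push_neg at hut
      have hdu : dist u t < δ := by
        rw [Real.dist_eq, abs_of_nonneg (by linarith)]
        rw [Real.dist_eq, abs_of_nonneg (by linarith)] at hd
        linarith [hu.2]
      have := hδ2 (le_of_lt hut) hdu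
      rw [Real.dist_eq] at this
      have h1 := (abs_lt.1 this).1
      have h2 := runMin_le hY ht ⟨ht, le_rfl⟩
      linarith
  rw [Real.dist_eq, abs_lt]
  constructor <;> linarith

-- EReal sInf characterization
lemma sInf_image_le_iff {T : Set ℝ} {t : ℝ} :
    sInf ((fun r : ℝ => (r : EReal)) '' T) ≤ (t : EReal) ↔ ∀ ε > 0, ∃ s ∈ T, s < t + ε := by
  constructor
  · intro h ε hε
    by_contra hc
    push_neg at hc
    have hlb : ((t + ε : ℝ) : EReal) ≤ sInf ((fun r : ℝ => (r : EReal)) '' T) := by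
      refine le_sInf ?_
      rintro _ ⟨s, hs, rfl⟩
      simpa using EReal.coe_le_coe_iff.2 (hc s hs)
    have := hlb.trans h
    have : t + ε ≤ t := by exact_mod_cast this
    linarith
  · intro h
    refine le_of_forall_gt_imp_ge_of_dense ?_
    intro c hc
    induction c using EReal.rec with
    | bot => exact absurd hc (by simp)
    | coe r =>
      have hr : t < r := by exact_mod_cast hc
      obtain ⟨s, hsT, hlt⟩ := h (r - t) (by linarith)
      calc sInf ((fun r : ℝ => (r : EReal)) '' T) ≤ (s : EReal) :=
            sInf_le (mem_image_of_mem _ hsT)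
        _ ≤ (r : EReal) := by exact_mod_cast le_of_lt (by linarith : s < r)
    | top => exact le_top

lemma hitTime_refl_le_iff {Y : ℝ → ℝ} (hY : LowerSemicontinuous Y)
    (hYr : ∀ u, ContinuousWithinAt Y (Ici u) u) {x t : ℝ} (ht : 0 ≤ t) :
    hitTime (reflTerm Y) x ≤ (t : EReal) ↔ x ≤ reflTerm Y t := by
  rw [hitTime, sInf_image_le_iff]
  constructor
  · intro h
    by_contra hc
    push_neg at hc
    have hL : ContinuousWithinAt (reflTerm Y) (Ici t) t :=
      continuousWithinAt_const.max (runMin_rightCont hY hYr ht).neg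
    have hmem : {s : ℝ | reflTerm Y s < x} ∈ 𝓝[Ici t] t := hL.eventually_lt_const hc
    obtain ⟨u, hu, hsub⟩ := mem_nhdsGE_iff_exists_Ico_subset.1 hmem
    obtain ⟨s, ⟨hs0, hsx⟩, hslt⟩ := h (u - t) (by simp only [mem_Ioi] at hu; linarith)
    by_cases hst : s ≤ t
    · have : reflTerm Y s ≤ reflTerm Y t :=
        max_le_max le_rfl (neg_le_neg (runMin_anti hY hs0 hst))
      linarith
    · push_neg at hst
      have : s ∈ Ico t u := ⟨le_of_lt hst, by linarith⟩
      have := hsub this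
      simp only [mem_setOf_eq] at this
      linarith
  · intro h ε hε
    exact ⟨t, ⟨ht, h⟩, by linarith⟩

lemma hitZeroTime_le_iff {Y : ℝ → ℝ} (hY : LowerSemicontinuous Y)
    (hYr : ∀ u, ContinuousWithinAt Y (Ici u) u) {t : ℝ} (ht : 0 ≤ t) :
    hitZeroTime Y ≤ (t : EReal) ↔ runMin Y t ≤ 0 := by
  rw [hitZeroTime, sInf_image_le_iff]
  constructor
  · intro h
    by_contra hc
    push_neg at hc
    have hYt : 0 < Y t := lt_of_lt_of_le hc (runMin_le hY ht ⟨ht, le_rfl⟩)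
    have hmem : {s : ℝ | 0 < Y s} ∈ 𝓝[Ici t] t := (hYr t).eventually_const_lt hYt
    obtain ⟨u, hu, hsub⟩ := mem_nhdsGE_iff_exists_Ico_subset.1 hmem
    obtain ⟨s, ⟨hs0, hsY⟩, hslt⟩ := h (u - t) (by simp only [mem_Ioi] at hu; linarith)
    by_cases hst : s ≤ t
    · have := runMin_le hY ht ⟨hs0, hst⟩; linarith
    · push_neg at hst
      have := hsub ⟨le_of_lt hst, by linarith⟩
      simp only [mem_setOf_eq] at this
      linarith
  · intro h ε hε
    obtain ⟨s, hs, hsv, _⟩ := runMin_attained hY ht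
    exact ⟨s, ⟨hs.1, by linarith [hsv ▸ h]⟩, by linarith [hs.2]⟩

lemma runMin_add_const {Y : ℝ → ℝ} (hY : LowerSemicontinuous Y) {t : ℝ} (ht : 0 ≤ t) (x : ℝ) :
    runMin (fun s => Y s + x) t = runMin Y t + x := by
  obtain ⟨s0, hs0, hval, hmin⟩ := runMin_attained hY ht
  have h1 : runMin (fun s => Y s + x) t = Y s0 + x := by
    refine le_antisymm (csInf_le ⟨Y s0 + x, ?_⟩ ⟨s0, hs0, rfl⟩)
      (le_csInf ⟨Y s0 + x, ⟨s0, hs0, rfl⟩⟩ ?_) <;>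
    · rintro _ ⟨u, hu, rfl⟩
      simp only
      linarith [hmin u hu]
  rw [h1, ← hval]

/-- The Skorokhod reflection map at `0`: `Θ(Y)_t = Y_t + max(0, −inf_{0≤s≤t} Y_s)`. -/
def skorokhod (Y : ℝ → ℝ) (t : ℝ) : ℝ := Y t + reflTerm Y t

/-- an increasing càdlàg `Λ : [0,∞) → [0,1]` with `Λ_{0-} = 0` solves the
elastic feedback problem if and only if it solves the absorbing feedback problem with
initial condition `Z_{0-} = X_{0-} + ξ`. -/
theorem statement_3 {Ω : Type*} [MeasurableSpace Ω] (P : Measure Ω) [IsProbabilityMeasure P]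
    (α κ : ℝ) (hα : 0 < α) (hκ : 0 < κ)
    (B : ℝ → Ω → ℝ) (X0 ξ : Ω → ℝ)
    (hB : IsStandardBM P B)
    (hX0meas : Measurable X0) (hX0nonneg : ∀ ω, 0 ≤ X0 ω)
    (hξ : IsExponential P κ ξ)
    (hindepX0ξ : IndepFun X0 ξ P)
    (hindepB : IndepFun (fun ω => (X0 ω, ξ ω)) (fun ω => fun t => B t ω) P)
    (Λ : ℝ → ℝ) (hΛ : IsLossFn Λ) :
    IsElasticSol P B X0 ξ α Λ ↔ IsAbsorbingSol P B (fun ω => X0 ω + ξ ω) α Λ := by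
  have hBcont : ∀ ω, Continuous fun s => B s ω := hB.2.1
  -- the set where ξ is positive has full measure
  set G : Set Ω := {ω | 0 < ξ ω} with hGdef
  have hGmeas : MeasurableSet G := measurableSet_lt measurable_const hξ.1
  have hG1 : P G = 1 := by
    have := hξ.2 0 le_rfl
    simpa using this
  have hGc : P Gᶜ = 0 := by
    have := measure_compl hGmeas (measure_ne_top P G)
    rw [hG1, measure_univ] at this
    simpa using this
  have hinterG : ∀ S : Set Ω, P S = P (S ∩ G) := by
    intro S
    refine le_antisymm ?_ (measure_mono inter_subset_left)
    calc P S ≤ P ((S ∩ G) ∪ Gᶜ) := by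
          refine measure_mono fun ω hω => ?_
          by_cases h : ω ∈ G
          · exact Or.inl ⟨hω, h⟩
          · exact Or.inr h
      _ ≤ P (S ∩ G) + P Gᶜ := measure_union_le _ _
      _ = P (S ∩ G) := by rw [hGc, add_zero]
  -- pointwise equivalence of the stopping-time events on G
  have hpt : ∀ t : ℝ, 0 ≤ t → ∀ ω ∈ G,
      (elasticTau B X0 ξ α Λ ω ≤ (t : EReal) ↔
        absorbTau B (fun ω => X0 ω + ξ ω) α Λ ω ≤ (t : EReal)) := by
    intro t ht ω hω
    have hξω : 0 < ξ ω := hω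
    set Y : ℝ → ℝ := fun s => X0 ω + B s ω - α * Λ s with hYdef
    set Z : ℝ → ℝ := fun s => (X0 ω + ξ ω) + B s ω - α * Λ s with hZdef
    have hYl : LowerSemicontinuous Y :=
      Y_lsc hΛ (continuous_const.add (hBcont ω)) hα
    have hYr : ∀ u, ContinuousWithinAt Y (Ici u) u := fun u =>
      Y_rightCont hΛ (continuous_const.add (hBcont ω)) α u
    have hZl : LowerSemicontinuous Z :=
      Y_lsc hΛ (continuous_const.add (hBcont ω)) hα
    have hZr : ∀ u, ContinuousWithinAt Z (Ici u) u := fun u =>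
      Y_rightCont hΛ (continuous_const.add (hBcont ω)) α u
    have hZeq : Z = fun s => Y s + ξ ω := by
      funext s
      simp only [hZdef, hYdef]
      ring
    have e1 : elasticTau B X0 ξ α Λ ω ≤ (t : EReal) ↔ ξ ω ≤ reflTerm Y t :=
      hitTime_refl_le_iff hYl hYr ht
    have e2 : ξ ω ≤ reflTerm Y t ↔ runMin Y t ≤ -ξ ω := by
      constructor
      · intro h
        rcases le_max_iff.1 h with h | h
        · linarith
        · linarith
      · intro h
        exact le_max_of_le_right (by linarith)
    have e3 : absorbTau B (fun ω => X0 ω + ξ ω) α Λ ω ≤ (t : EReal) ↔ runMin Z t ≤ 0 :=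
      hitZeroTime_le_iff hZl hZr ht
    have e4 : runMin Z t = runMin Y t + ξ ω := by
      rw [hZeq, runMin_add_const hYl ht]
    rw [e1, e2, e3, e4]
    constructor <;> intro h <;> linarith
  -- equality of the event probabilities
  have key : ∀ t : ℝ, 0 ≤ t →
      P {ω | elasticTau B X0 ξ α Λ ω ≤ (t : EReal)} =
        P {ω | absorbTau B (fun ω => X0 ω + ξ ω) α Λ ω ≤ (t : EReal)} := by
    intro t ht
    rw [hinterG {ω | elasticTau B X0 ξ α Λ ω ≤ (t : EReal)},
      hinterG {ω | absorbTau B (fun ω => X0 ω + ξ ω) α Λ ω ≤ (t : EReal)}]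
    congr 1
    ext ω
    simp only [mem_inter_iff, mem_setOf_eq]
    constructor
    · rintro ⟨h1, h2⟩
      exact ⟨(hpt t ht ω h2).1 h1, h2⟩
    · rintro ⟨h1, h2⟩
      exact ⟨(hpt t ht ω h2).2 h1, h2⟩
  constructor
  · rintro ⟨h1, h2⟩
    exact ⟨h1, fun t ht => (h2 t ht).trans (by rw [key t ht])⟩
  · rintro ⟨h1, h2⟩
    exact ⟨h1, fun t ht => (h2 t ht).trans (by rw [key t ht])⟩


end
end

section
/- In the N-particle elastic feedback system, the elastic stopping times coincide pathwise with absorbing hitting times for the shifted initial conditions: surely, for every i = 1, …, N, τ_{i,N} = inf{t ≥ 0 : X^i_{0-} + ξ^i + B^i_t − αΛ^N_t ≤ 0}. Consequently, (Λ^N) solves the elastic particle system if and only if it solves the absorbing particle system with initial conditions X^i_{0-} + ξ^i. -/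
open MeasureTheory ProbabilityTheory Filter Topology Set

noncomputable section

lemma aux_usc {Λ : ℝ → ℝ} (hmono : Monotone Λ)
    (hrc : ∀ t : ℝ, ContinuousWithinAt Λ (Set.Ici t) t) : UpperSemicontinuous Λ := by
  intro x y hy
  have h1 : ∀ᶠ s in 𝓝[≥] x, Λ s < y := (hrc x).eventually_lt_const hy
  have h2 : ∀ᶠ s in 𝓝[<] x, Λ s < y :=
    eventually_nhdsWithin_of_forall fun s hs => lt_of_le_of_lt (hmono (le_of_lt hs)) hy
  rw [← nhdsLT_sup_nhdsGE x]
  exact eventually_sup.2 ⟨h2, h1⟩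

lemma aux_lsc {g Λ : ℝ → ℝ} (hg : Continuous g) (hmono : Monotone Λ)
    (hrc : ∀ t : ℝ, ContinuousWithinAt Λ (Set.Ici t) t) {α : ℝ} (hα : 0 < α) :
    LowerSemicontinuous fun s => g s - α * Λ s := by
  intro x y hy
  simp only [] at hy
  set ε := (g x - α * Λ x - y) / 2 with hε
  have hεpos : 0 < ε := by rw [hε]; linarith
  have h1 : ∀ᶠ s in 𝓝 x, g x - ε < g s :=
    (hg.tendsto x).eventually_const_lt (by linarith)
  have h2 : ∀ᶠ s in 𝓝 x, Λ s < Λ x + ε / α :=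
    aux_usc hmono hrc x _ (lt_add_of_pos_right _ (div_pos hεpos hα))
  filter_upwards [h1, h2] with s hs1 hs2
  have h3 : α * Λ s < α * (Λ x + ε / α) := (mul_lt_mul_iff_right₀ hα).2 hs2
  have h4 : α * (Λ x + ε / α) = α * Λ x + ε := by field_simp
  have h5 : ε + ε = g x - α * Λ x - y := by rw [hε]; ring
  linarith

lemma aux_min {F : ℝ → ℝ} (hF : LowerSemicontinuous F) {t : ℝ} (ht : 0 ≤ t)
    (hbdd : BddBelow (F '' Set.Icc 0 t)) :
    ∃ s ∈ Set.Icc (0:ℝ) t, ∀ u ∈ Set.Icc (0:ℝ) t, F s ≤ F u := by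
  have hne : (Set.Icc (0:ℝ) t).Nonempty := ⟨0, le_refl 0, ht⟩
  set m := sInf (F '' Set.Icc 0 t) with hm
  set K : ℕ → Set ℝ := fun n => Set.Icc 0 t ∩ F ⁻¹' Set.Iic (m + 1/(n+1)) with hK
  have hKne : ∀ n, (K n).Nonempty := by
    intro n
    have hpos : (0:ℝ) < 1/((n:ℝ)+1) := by positivity
    obtain ⟨y, ⟨s, hs, rfl⟩, hy⟩ :=
      exists_lt_of_csInf_lt (hne.image F) (show m < m + 1/((n:ℝ)+1) by linarith)
    exact ⟨s, hs, le_of_lt hy⟩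
  have hKcl : ∀ n, IsClosed (K n) := fun n => isClosed_Icc.inter (hF.isClosed_preimage _)
  have hKsub : ∀ n, K (n+1) ⊆ K n := by
    intro n s hs
    simp only [hK, Set.mem_inter_iff, Set.mem_preimage, Set.mem_Iic] at hs ⊢
    have h9 : 1/((n:ℝ)+1+1) ≤ 1/((n:ℝ)+1) := by
      apply one_div_le_one_div_of_le <;> [positivity; linarith]
    refine ⟨hs.1, hs.2.trans ?_⟩
    push_cast
    linarith
  have hKcomp : IsCompact (K 0) := isCompact_Icc.inter_right (hF.isClosed_preimage _)
  obtain ⟨s, hs⟩ := IsCompact.nonempty_iInter_of_sequence_nonempty_isCompact_isClosed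
    K hKsub hKne hKcomp hKcl
  simp only [Set.mem_iInter] at hs
  refine ⟨s, (hs 0).1, fun u hu => ?_⟩
  have h1 : F s ≤ m := by
    refine le_of_forall_pos_le_add fun ε hε => ?_
    obtain ⟨n, hn⟩ := exists_nat_one_div_lt hε
    have := (hs n).2
    simp only [Set.mem_preimage, Set.mem_Iic] at this
    linarith
  exact h1.trans (csInf_le hbdd ⟨u, hu, rfl⟩)

lemma aux_tau {Y : ℝ → ℝ} (hlsc : LowerSemicontinuous Y)
    (hbdd : ∀ t : ℝ, 0 ≤ t → BddBelow (Y '' Set.Icc 0 t))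
    {ξ : ℝ} (hξ : 0 < ξ) :
    hitTime (reflTerm Y) ξ = hitZeroTime (fun s => Y s + ξ) := by
  apply le_antisymm
  · apply sInf_le_sInf
    apply Set.image_mono
    rintro u ⟨hu0, hu⟩
    simp only [] at hu
    refine ⟨hu0, ?_⟩
    have h1 : runMin Y u ≤ Y u := csInf_le (hbdd u hu0) ⟨u, ⟨hu0, le_refl u⟩, rfl⟩
    have h2 : ξ ≤ -(runMin Y u) := by linarith
    exact h2.trans (le_max_right _ _)
  · apply le_sInf
    rintro b ⟨u, ⟨hu0, hu⟩, rfl⟩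
    have hmax : ξ ≤ -(runMin Y u) := by
      rcases le_or_gt (-(runMin Y u)) 0 with h | h
      · rw [reflTerm, max_eq_left h] at hu; linarith
      · rwa [reflTerm, max_eq_right h.le] at hu
    obtain ⟨s, hsmem, hsmin⟩ := aux_min hlsc hu0 (hbdd u hu0)
    have hYs : Y s ≤ runMin Y u := by
      refine le_csInf ((Set.nonempty_Icc.2 hu0).image Y) ?_
      rintro y ⟨v, hv, rfl⟩
      exact hsmin v hv
    have hs2 : Y s + ξ ≤ 0 := by linarith
    refine le_trans (sInf_le ⟨s, ⟨hsmem.1, hs2⟩, rfl⟩) ?_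
    exact EReal.coe_le_coe_iff.2 hsmem.2


open scoped Classical

/-- in the `N`-particle elastic feedback system, the elastic stopping times
coincide pathwise with the absorbing hitting times for the shifted initial conditions
`X^i_{0-} + ξ^i`; consequently `Λ^N` solves the elastic particle system iff it solves the
absorbing particle system with those initial conditions. -/
theorem statement_10 {Ω : Type*} [MeasurableSpace Ω] (P : Measure Ω) [IsProbabilityMeasure P]
    (α κ : ℝ) (hα : 0 < α) (hκ : 0 < κ) (N : ℕ) (hN : 0 < N)
    (B : Fin N → ℝ → Ω → ℝ) (X0 ξ : Fin N → Ω → ℝ)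
    (hB : ∀ i, IsStandardBM P (B i))
    (hBindep : iIndepFun
      (fun i ω => fun t => B i t ω) P)
    (hX0meas : ∀ i, Measurable (X0 i)) (hX0nonneg : ∀ i ω, 0 ≤ X0 i ω)
    (hξexp : ∀ i, IsExponential P κ (ξ i)) (hξpos : ∀ i ω, 0 < ξ i ω)
    (hξiid : iIndepFun
      (fun i ω => ξ i ω) P)
    (hindepXξ : IndepFun (fun ω => fun i => X0 i ω) (fun ω => fun i => ξ i ω) P)
    (hindepB : IndepFun (fun ω => (fun i => X0 i ω, fun i => ξ i ω))
      (fun ω => fun i => fun t => B i t ω) P)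
    (Λ : Ω → ℝ → ℝ) (hΛ : ∀ ω, IsLossFn (Λ ω)) :
    (∀ ω (i : Fin N),
        elasticTau (B i) (X0 i) (ξ i) α (Λ ω) ω
          = absorbTau (B i) (fun ω' => X0 i ω' + ξ i ω') α (Λ ω) ω) ∧
      ((∀ ω, ∀ t : ℝ, 0 ≤ t →
          Λ ω t = (∑ i : Fin N,
            if elasticTau (B i) (X0 i) (ξ i) α (Λ ω) ω ≤ (t : EReal) then (1 : ℝ) else 0) / N)
        ↔ (∀ ω, ∀ t : ℝ, 0 ≤ t →
          Λ ω t = (∑ i : Fin N,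
            if absorbTau (B i) (fun ω' => X0 i ω' + ξ i ω') α (Λ ω) ω ≤ (t : EReal)
              then (1 : ℝ) else 0) / N)) := by
  have htau : ∀ ω (i : Fin N),
      elasticTau (B i) (X0 i) (ξ i) α (Λ ω) ω
        = absorbTau (B i) (fun ω' => X0 i ω' + ξ i ω') α (Λ ω) ω := by
    intro ω i
    obtain ⟨hmono, hrc, hneg, hle1⟩ := hΛ ω
    have hg : Continuous fun s => X0 i ω + B i s ω := continuous_const.add ((hB i).2.1 ω)
    set Y : ℝ → ℝ := fun s => X0 i ω + B i s ω - α * Λ ω s with hY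
    have hlsc : LowerSemicontinuous Y := aux_lsc hg hmono hrc hα
    have hbdd : ∀ t : ℝ, 0 ≤ t → BddBelow (Y '' Set.Icc 0 t) := by
      intro t ht
      obtain ⟨z, hz, hzmin⟩ := isCompact_Icc.exists_isMinOn ⟨0, le_refl 0, ht⟩ hg.continuousOn
      refine ⟨X0 i ω + B i z ω - α, ?_⟩
      rintro y ⟨s, hs, rfl⟩
      have h1 : X0 i ω + B i z ω ≤ X0 i ω + B i s ω := hzmin hs
      have h2 : α * Λ ω s ≤ α * 1 := mul_le_mul_of_nonneg_left (hle1 s) hα.le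
      simp only [hY]
      linarith
    have heq := aux_tau hlsc hbdd (hξpos i ω)
    unfold elasticTau absorbTau
    rw [heq]
    congr 1
    funext s
    simp only [hY]
    ring
  refine ⟨htau, ?_⟩
  have hsum : ∀ ω (t : ℝ),
      (∑ i : Fin N, if elasticTau (B i) (X0 i) (ξ i) α (Λ ω) ω ≤ (t : EReal)
        then (1:ℝ) else 0)
      = ∑ i : Fin N, if absorbTau (B i) (fun ω' => X0 i ω' + ξ i ω') α (Λ ω) ω ≤ (t : EReal)
        then (1:ℝ) else 0 :=
    fun ω t => Finset.sum_congr rfl fun i _ => by rw [htau ω i]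
  constructor
  · intro h ω t ht; rw [← hsum ω t]; exact h ω t ht
  · intro h ω t ht; rw [hsum ω t]; exact h ω t ht


end
end

section
/- For 0 < κ₁ < κ₂, let Λ^{κ₁} and Λ^{κ₂} denote the minimal solutions of the elastic feedback problem with parameters κ₁ and κ₂ respectively (same α and same initial condition X_{0-}). Then Λ^{κ₁}_t ≤ Λ^{κ₂}_t for all t ≥ 0. -/
open MeasureTheory ProbabilityTheory Filter Topology Set

noncomputable section

namespace Aux

lemma lossFn_nonneg {Λ : ℝ → ℝ} (hΛ : IsLossFn Λ) (t : ℝ) : 0 ≤ Λ t := by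
  rcases lt_or_ge t 0 with ht | ht
  · rw [hΛ.2.2.1 t ht]
  · rw [← hΛ.2.2.1 (-1) (by norm_num)]
    exact hΛ.1 (by linarith)

section Path

variable {α : ℝ} {Λ : ℝ → ℝ} {c : ℝ} {b : ℝ → ℝ}

/-- The driving path. -/
def pathY (c : ℝ) (b : ℝ → ℝ) (α : ℝ) (Λ : ℝ → ℝ) : ℝ → ℝ := fun s => c + b s - α * Λ s

lemma bddBelow_pathY (hα : 0 < α) (hΛ1 : ∀ s, Λ s ≤ 1) (hb : Continuous b) (t : ℝ) :
    BddBelow (pathY c b α Λ '' Set.Icc 0 t) := by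
  obtain ⟨m, hm⟩ : BddBelow ((fun s => c + b s) '' Set.Icc 0 t) :=
    isCompact_Icc.bddBelow_image (continuous_const.add hb).continuousOn
  refine ⟨m - α, ?_⟩
  rintro y ⟨s, hs, rfl⟩
  have h1 : m ≤ c + b s := hm ⟨s, hs, rfl⟩
  have h2 : α * Λ s ≤ α := by
    have := mul_le_mul_of_nonneg_left (hΛ1 s) hα.le
    simpa using this
  simp only [pathY]
  linarith

lemma runMin_of_neg {Y : ℝ → ℝ} {t : ℝ} (ht : t < 0) : runMin Y t = 0 := by
  rw [runMin, Set.Icc_eq_empty (by linarith), Set.image_empty, Real.sInf_empty]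

lemma reflTerm_of_neg {Y : ℝ → ℝ} {t : ℝ} (ht : t < 0) : reflTerm Y t = 0 := by
  rw [reflTerm, runMin_of_neg ht, neg_zero, max_self]

lemma reflTerm_nonneg (Y : ℝ → ℝ) (t : ℝ) : 0 ≤ reflTerm Y t := le_max_left _ _

lemma runMin_le (hα : 0 < α) (hΛ1 : ∀ s, Λ s ≤ 1) (hb : Continuous b) {s t : ℝ}
    (hs0 : 0 ≤ s) (hst : s ≤ t) : runMin (pathY c b α Λ) t ≤ pathY c b α Λ s :=
  csInf_le (bddBelow_pathY hα hΛ1 hb t) ⟨s, ⟨hs0, hst⟩, rfl⟩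

lemma runMin_anti (hα : 0 < α) (hΛ1 : ∀ s, Λ s ≤ 1) (hb : Continuous b) {s t : ℝ}
    (hs0 : 0 ≤ s) (hst : s ≤ t) :
    runMin (pathY c b α Λ) t ≤ runMin (pathY c b α Λ) s := by
  apply csInf_le_csInf (bddBelow_pathY hα hΛ1 hb t)
  · exact ⟨pathY c b α Λ 0, ⟨0, ⟨le_refl 0, hs0⟩, rfl⟩⟩
  · exact Set.image_mono (Set.Icc_subset_Icc_right hst)

lemma reflTerm_mono (hα : 0 < α) (hΛ1 : ∀ s, Λ s ≤ 1) (hb : Continuous b) :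
    Monotone (reflTerm (pathY c b α Λ)) := by
  intro s t hst
  rcases lt_or_ge s 0 with hs | hs
  · rw [reflTerm_of_neg hs]; exact reflTerm_nonneg _ _
  · exact max_le_max le_rfl (neg_le_neg (runMin_anti hα hΛ1 hb hs hst))

lemma reflTerm_rightCont (hα : 0 < α) (hΛ : IsLossFn Λ) (hb : Continuous b) (t : ℝ) :
    ContinuousWithinAt (reflTerm (pathY c b α Λ)) (Set.Ici t) t := by
  set Y := pathY c b α Λ with hY
  rw [Metric.continuousWithinAt_iff]
  intro ε hε
  rcases lt_or_ge t 0 with ht | ht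
  · refine ⟨-t, by linarith, fun x hx hdx => ?_⟩
    have hx' : x < 0 := by
      have : x - t < -t := by
        have := abs_lt.mp (by simpa [Real.dist_eq] using hdx)
        linarith [this.2]
      linarith
    rw [reflTerm_of_neg hx', reflTerm_of_neg ht]
    simpa using hε
  · -- right continuity at t ≥ 0
    obtain ⟨δ₁, hδ₁, hδ₁'⟩ :=
      Metric.continuousAt_iff.mp (hb.continuousAt (x := t)) (ε / 4) (by linarith)
    have hΛ' := Metric.continuousWithinAt_iff.mp (hΛ.2.1 t) (ε := ε / (4 * α)) (by positivity)
    obtain ⟨δ₂, hδ₂, hδ₂'⟩ := hΛ'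
    refine ⟨min δ₁ δ₂, lt_min hδ₁ hδ₂, fun x hx hdx => ?_⟩
    have hxt : t ≤ x := hx
    have hx0 : 0 ≤ x := le_trans ht hxt
    -- runMin Y x ≤ runMin Y t
    have hup : runMin Y x ≤ runMin Y t := runMin_anti hα hΛ.2.2.2 hb ht hxt
    -- runMin Y t - ε/2 ≤ runMin Y x
    have hdx' : x - t < min δ₁ δ₂ := by
      rw [Real.dist_eq, abs_of_nonneg (by linarith : (0:ℝ) ≤ x - t)] at hdx
      exact hdx
    have hdown : runMin Y t - ε / 2 ≤ runMin Y x := by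
      rw [show runMin Y x = sInf (Y '' Set.Icc 0 x) from rfl]
      refine le_csInf ⟨Y 0, ⟨0, ⟨le_rfl, hx0⟩, rfl⟩⟩ ?_
      rintro y ⟨s, ⟨hs0, hsx⟩, rfl⟩
      rcases le_or_gt s t with hst | hts
      · linarith [runMin_le (c := c) hα hΛ.2.2.2 hb hs0 hst]
      · have hsd : dist s t < min δ₁ δ₂ := by
          rw [Real.dist_eq, abs_of_nonneg (by linarith : (0:ℝ) ≤ s - t)]
          linarith
        have hbs : |b s - b t| < ε / 4 := by
          have := hδ₁' (lt_of_lt_of_le hsd (min_le_left _ _))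
          simpa [Real.dist_eq] using this
        have hΛs : |Λ s - Λ t| < ε / (4 * α) := by
          have := hδ₂' (show s ∈ Set.Ici t from le_of_lt hts)
            (lt_of_lt_of_le hsd (min_le_right _ _))
          simpa [Real.dist_eq] using this
        have hαΛ : α * Λ s ≤ α * Λ t + ε / 4 := by
          have h1 : Λ s ≤ Λ t + ε / (4 * α) := by linarith [(abs_le.mp hΛs.le).2]
          have h2 : α * Λ s ≤ α * (Λ t + ε / (4 * α)) :=
            mul_le_mul_of_nonneg_left h1 hα.le
          have h3 : α * (ε / (4 * α)) = ε / 4 := by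
            field_simp
          nlinarith [mul_add α (Λ t) (ε / (4 * α))]
        have hYt : runMin Y t ≤ Y t := runMin_le hα hΛ.2.2.2 hb ht le_rfl
        have hYs : Y t - ε / 2 ≤ Y s := by
          simp only [hY, pathY]
          linarith [(abs_le.mp hbs.le).1]
        linarith
    have : |runMin Y x - runMin Y t| ≤ ε / 2 := by
      rw [abs_le]; constructor <;> linarith
    rw [Real.dist_eq, reflTerm, reflTerm, max_comm (0:ℝ) (-runMin Y x),
      max_comm (0:ℝ) (-runMin Y t)]
    calc |max (-runMin Y x) 0 - max (-runMin Y t) 0| ≤ |(-runMin Y x) - (-runMin Y t)| :=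
      abs_max_sub_max_le_abs _ _ _
    _ = |runMin Y x - runMin Y t| := by rw [← abs_neg]; ring_nf
    _ ≤ ε / 2 := this
    _ < ε := by linarith

end Path

section Path2

variable {α : ℝ} {Λ : ℝ → ℝ} {c : ℝ} {b : ℝ → ℝ}

/-- Countable dense-from-the-right set in `[0,t]` containing `t`. -/
def Dset (t : ℝ) : Set ℝ := insert t {s : ℝ | (∃ q : ℚ, (q : ℝ) = s) ∧ 0 ≤ s ∧ s ≤ t}

lemma Dset_countable (t : ℝ) : (Dset t).Countable := by
  refine Set.Countable.insert t ?_
  refine Set.Countable.mono ?_ (Set.countable_range ((↑) : ℚ → ℝ))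
  rintro s ⟨⟨q, hq⟩, -⟩
  exact ⟨q, hq⟩

instance (t : ℝ) : Countable ↥(Dset t) := (Dset_countable t).to_subtype

instance (t : ℝ) : Nonempty ↥(Dset t) := ⟨⟨t, Set.mem_insert _ _⟩⟩

lemma Dset_subset {t : ℝ} (ht : 0 ≤ t) : Dset t ⊆ Set.Icc 0 t := by
  rintro s (rfl | ⟨-, hs⟩)
  · exact ⟨ht, le_rfl⟩
  · exact hs

lemma runMin_eq_sInf_Dset (hα : 0 < α) (hΛ : IsLossFn Λ) (hb : Continuous b) {t : ℝ}
    (ht : 0 ≤ t) : runMin (pathY c b α Λ) t = sInf (pathY c b α Λ '' Dset t) := by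
  set Y := pathY c b α Λ with hY
  have hbddD : BddBelow (Y '' Dset t) :=
    (bddBelow_pathY hα hΛ.2.2.2 hb t).mono (Set.image_mono (Dset_subset ht))
  apply le_antisymm
  · exact csInf_le_csInf (bddBelow_pathY hα hΛ.2.2.2 hb t)
      ⟨Y t, ⟨t, Set.mem_insert _ _, rfl⟩⟩ (Set.image_mono (Dset_subset ht))
  · refine le_csInf ⟨Y t, ⟨t, ⟨ht, le_rfl⟩, rfl⟩⟩ ?_
    rintro y ⟨s, ⟨hs0, hst⟩, rfl⟩
    rcases eq_or_lt_of_le hst with rfl | hlt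
    · exact csInf_le hbddD ⟨s, Set.mem_insert _ _, rfl⟩
    · have hq : ∀ n : ℕ, ∃ q : ℚ, s < (q : ℝ) ∧ (q : ℝ) < s + (t - s) / (n + 1) := by
        intro n
        apply exists_rat_btwn
        have h0 : (0 : ℝ) < (t - s) / ((n : ℝ) + 1) := by
          apply div_pos (by linarith)
          positivity
        linarith
      choose q hq1 hq2 using hq
      have hqt : ∀ n : ℕ, (q n : ℝ) ≤ t := by
        intro n
        have h1 : (t - s) / ((n : ℝ) + 1) ≤ t - s := by
          apply div_le_self (by linarith)
          have : (0 : ℝ) ≤ (n : ℝ) := Nat.cast_nonneg n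
          linarith
        linarith [hq2 n]
      have hmem : ∀ n : ℕ, ((q n : ℝ)) ∈ Dset t := fun n =>
        Set.mem_insert_iff.mpr (Or.inr ⟨⟨q n, rfl⟩, by linarith [hq1 n], hqt n⟩)
      have htend : Tendsto (fun n : ℕ => (q n : ℝ)) atTop (𝓝 s) := by
        have h2 : Tendsto (fun n : ℕ => (t - s) * (1 / ((n : ℝ) + 1))) atTop
            (𝓝 ((t - s) * 0)) :=
          tendsto_one_div_add_atTop_nhds_zero_nat.const_mul (t - s)
        have h0 : Tendsto (fun n : ℕ => s + (t - s) / ((n : ℝ) + 1)) atTop (𝓝 s) := by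
          have := tendsto_const_nhds (x := s) (f := atTop (α := ℕ)) |>.add h2
          simpa [mul_one_div, div_eq_mul_inv] using this
        exact tendsto_of_tendsto_of_tendsto_of_le_of_le tendsto_const_nhds h0
          (fun n => (hq1 n).le) (fun n => (hq2 n).le)
      have hYtend : Tendsto (fun n : ℕ => Y (q n)) atTop (𝓝 (Y s)) := by
        have hbt : Tendsto (fun n : ℕ => b (q n)) atTop (𝓝 (b s)) :=
          (hb.continuousAt (x := s)).tendsto.comp htend
        have hΛt : Tendsto (fun n : ℕ => Λ (q n)) atTop (𝓝 (Λ s)) := by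
          apply (hΛ.2.1 s).tendsto.comp
          rw [tendsto_nhdsWithin_iff]
          exact ⟨htend, Filter.Eventually.of_forall fun n => (hq1 n).le⟩
        have : Tendsto (fun n : ℕ => c + b (q n) - α * Λ (q n)) atTop
            (𝓝 (c + b s - α * Λ s)) :=
          (tendsto_const_nhds.add hbt).sub (hΛt.const_mul α)
        simpa [hY, pathY] using this
      exact ge_of_tendsto hYtend
        (Filter.Eventually.of_forall fun n => csInf_le hbddD ⟨q n, hmem n, rfl⟩)

lemma reflTerm_eq_iSup (hα : 0 < α) (hΛ : IsLossFn Λ) (hb : Continuous b) {t : ℝ}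
    (ht : 0 ≤ t) :
    reflTerm (pathY c b α Λ) t
      = (⨆ s : Dset t, ENNReal.ofReal (α * Λ s - c - b s)).toReal := by
  set Y := pathY c b α Λ with hY
  have hbddD : BddBelow (Y '' Dset t) :=
    (bddBelow_pathY hα hΛ.2.2.2 hb t).mono (Set.image_mono (Dset_subset ht))
  have hfun : ∀ s : ℝ, α * Λ s - c - b s = -(Y s) := by
    intro s; simp [hY, pathY]; ring
  have h1 : BddAbove (Set.range fun s : Dset t => α * Λ (s : ℝ) - c - b (s : ℝ)) := by
    obtain ⟨m, hm⟩ := hbddD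
    refine ⟨-m, ?_⟩
    rintro y ⟨s, rfl⟩
    have h2 : m ≤ Y s := hm ⟨(s : ℝ), s.2, rfl⟩
    show α * Λ (s : ℝ) - c - b (s : ℝ) ≤ -m
    rw [hfun]
    linarith
  have h2 : (⨆ s : Dset t, ENNReal.ofReal (α * Λ s - c - b s))
      = ENNReal.ofReal (⨆ s : Dset t, (α * Λ (s : ℝ) - c - b (s : ℝ))) :=
    (Monotone.map_ciSup_of_continuousAt (ENNReal.continuous_ofReal.continuousAt)
      (fun x y h => ENNReal.ofReal_le_ofReal h) h1).symm
  have h3 : (⨆ s : Dset t, (α * Λ (s : ℝ) - c - b (s : ℝ)))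
      = sSup ((fun x => -(Y x)) '' Dset t) := by
    simp only [hfun]
    rw [iSup, Set.image_eq_range]
  have h4 : sSup ((fun x => -(Y x)) '' Dset t) = -sInf (Y '' Dset t) := by
    rw [Real.sInf_def, neg_neg]
    congr 1
    ext y
    simp only [Set.mem_neg, Set.mem_image]
    constructor
    · rintro ⟨x, hx, rfl⟩; exact ⟨x, hx, by ring⟩
    · rintro ⟨x, hx, h⟩; exact ⟨x, hx, by linarith⟩
  rw [h2, h3, h4, ENNReal.toReal_ofReal', reflTerm,
    runMin_eq_sInf_Dset hα hΛ hb ht, max_comm]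

lemma hitTime_nonneg (L : ℝ → ℝ) (x : ℝ) : (0 : EReal) ≤ hitTime L x := by
  refine le_sInf ?_
  rintro y ⟨s, ⟨hs0, -⟩, rfl⟩
  show (0 : EReal) ≤ (s : EReal)
  exact_mod_cast hs0

lemma hitTime_le_iff {L : ℝ → ℝ} (hmono : Monotone L) {t : ℝ}
    (hrc : ContinuousWithinAt L (Set.Ici t) t) (ht : 0 ≤ t) (x : ℝ) :
    hitTime L x ≤ (t : EReal) ↔ x ≤ L t := by
  constructor
  · intro h
    by_contra hx
    push_neg at hx
    obtain ⟨δ, hδ, hδ'⟩ := Metric.continuousWithinAt_iff.mp hrc (x - L t) (by linarith)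
    have hlb : ((t + δ / 2 : ℝ) : EReal) ≤ hitTime L x := by
      refine le_sInf ?_
      rintro y ⟨s, ⟨hs0, hxs⟩, rfl⟩
      rw [EReal.coe_le_coe_iff]
      by_contra hs
      push_neg at hs
      rcases le_or_gt s t with h1 | h1
      · have := hmono h1
        linarith
      · have hds : dist s t < δ := by
          rw [Real.dist_eq, abs_of_pos (by linarith)]
          linarith
        have h2 := hδ' (le_of_lt h1 : s ∈ Set.Ici t) hds
        rw [Real.dist_eq] at h2
        have h3 := (abs_lt.mp h2).2
        linarith
    have h4 := le_trans hlb h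
    rw [EReal.coe_le_coe_iff] at h4
    linarith
  · intro h
    exact sInf_le ⟨t, ⟨ht, h⟩, rfl⟩

lemma le_rightLim_iff_seq {L : ℝ → ℝ} (hmono : Monotone L) {t : ℝ}
    (hrc : ContinuousWithinAt L (Set.Ici t) t) (x : ℝ) :
    (∀ n : ℕ, x ≤ L (t + 1 / (n + 1))) ↔ x ≤ L t := by
  constructor
  · intro h
    by_contra hx
    push_neg at hx
    obtain ⟨δ, hδ, hδ'⟩ := Metric.continuousWithinAt_iff.mp hrc (x - L t) (by linarith)
    obtain ⟨n, hn⟩ := exists_nat_one_div_lt hδ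
    have hpos : (0 : ℝ) < 1 / ((n : ℝ) + 1) := by positivity
    have hmem : (t + 1 / ((n : ℝ) + 1)) ∈ Set.Ici t := by
      simp only [Set.mem_Ici]; linarith
    have hd : dist (t + 1 / ((n : ℝ) + 1)) t < δ := by
      rw [Real.dist_eq, add_sub_cancel_left, abs_of_pos hpos]
      exact_mod_cast hn
    have h2 := hδ' hmem hd
    rw [Real.dist_eq] at h2
    have h3 := (abs_lt.mp h2).2
    have h4 := h n
    push_cast at h4
    linarith
  · intro h n
    have hpos : (0 : ℝ) < 1 / ((n : ℝ) + 1) := by positivity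
    exact le_trans h (hmono (by push_cast; linarith))

lemma hitTime_anti {Λ Λ' : ℝ → ℝ} (hα : 0 < α) (hle : ∀ s, Λ s ≤ Λ' s)
    (hΛ'1 : ∀ s, Λ' s ≤ 1) (hb : Continuous b) (x : ℝ) :
    hitTime (reflTerm (pathY c b α Λ')) x ≤ hitTime (reflTerm (pathY c b α Λ)) x := by
  apply sInf_le_sInf
  apply Set.image_mono
  rintro s ⟨hs0, hxs⟩
  refine ⟨hs0, le_trans hxs ?_⟩
  rcases lt_or_ge s 0 with h | h
  · rw [reflTerm_of_neg h, reflTerm_of_neg h]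
  · refine max_le_max le_rfl (neg_le_neg ?_)
    refine le_csInf ⟨pathY c b α Λ 0, ⟨0, ⟨le_rfl, h⟩, rfl⟩⟩ ?_
    rintro y ⟨u, hu, rfl⟩
    calc sInf (pathY c b α Λ' '' Set.Icc 0 s) ≤ pathY c b α Λ' u :=
      csInf_le (bddBelow_pathY hα hΛ'1 hb s) ⟨u, hu, rfl⟩
    _ ≤ pathY c b α Λ u := by
      simp only [pathY]
      have := mul_le_mul_of_nonneg_left (hle u) hα.le
      linarith

end Path2

section Prob

open MeasurableSpace

/-- The reflection term at time `t` as a measurable functional of `(X0, B)`. -/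
def psiFn (α : ℝ) (Λ : ℝ → ℝ) (t : ℝ) (p : ℝ × (ℝ → ℝ)) : ℝ :=
  (⨆ s : Dset t, ENNReal.ofReal (α * Λ s - p.1 - p.2 s)).toReal

lemma psiFn_nonneg (α : ℝ) (Λ : ℝ → ℝ) (t : ℝ) (p : ℝ × (ℝ → ℝ)) : 0 ≤ psiFn α Λ t p :=
  ENNReal.toReal_nonneg

lemma psiFn_measurable (α : ℝ) (Λ : ℝ → ℝ) (t : ℝ) : Measurable (psiFn α Λ t) := by
  apply Measurable.ennreal_toReal
  apply Measurable.iSup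
  intro s
  apply ENNReal.measurable_ofReal.comp
  apply Measurable.sub
  · exact (measurable_const.sub measurable_fst)
  · exact (measurable_pi_apply (s : ℝ)).comp measurable_snd

lemma psiFn_eq_reflTerm {α : ℝ} {Λ : ℝ → ℝ} (hα : 0 < α) (hΛ : IsLossFn Λ)
    {b : ℝ → ℝ} (hb : Continuous b) {t : ℝ} (ht : 0 ≤ t) (c : ℝ) :
    psiFn α Λ t (c, b) = reflTerm (pathY c b α Λ) t := by
  rw [reflTerm_eq_iSup hα hΛ hb ht]
  rfl

/-- From `X0 ⊥ ξ` and `(X0, ξ) ⊥ B`, deduce `ξ ⊥ (X0, B)`. -/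
lemma indep_xi_pair {Ω : Type*} [MeasurableSpace Ω] (P : Measure Ω) [IsProbabilityMeasure P]
    (X0 ξ : Ω → ℝ) (Bf : Ω → ℝ → ℝ) (hX0 : Measurable X0) (hξ : Measurable ξ)
    (hBf : Measurable Bf) (h1 : IndepFun X0 ξ P)
    (h2 : IndepFun (fun ω => (X0 ω, ξ ω)) Bf P) :
    IndepFun ξ (fun ω => (X0 ω, Bf ω)) P := by
  set p1 : Set (Set Ω) := {S | ∃ s : Set ℝ, MeasurableSet s ∧ ξ ⁻¹' s = S} with hp1def
  set p2 : Set (Set Ω) :=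
    {S | ∃ (u : Set ℝ) (v : Set (ℝ → ℝ)), MeasurableSet u ∧ MeasurableSet v ∧
      X0 ⁻¹' u ∩ Bf ⁻¹' v = S} with hp2def
  have hpi1 : IsPiSystem p1 := by
    rintro S ⟨s, hs, rfl⟩ T ⟨r, hr, rfl⟩ -
    exact ⟨s ∩ r, hs.inter hr, by rw [Set.preimage_inter]⟩
  have hpi2 : IsPiSystem p2 := by
    rintro S ⟨u, v, hu, hv, rfl⟩ T ⟨u', v', hu', hv', rfl⟩ -
    refine ⟨u ∩ u', v ∩ v', hu.inter hu', hv.inter hv', ?_⟩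
    rw [Set.preimage_inter, Set.preimage_inter]
    ext ω; simp only [Set.mem_inter_iff]; tauto
  have hgen1 : MeasurableSpace.comap ξ inferInstance = generateFrom p1 :=
    MeasurableSpace.comap_eq_generateFrom _ ξ
  have hgen2 : MeasurableSpace.comap (fun ω => (X0 ω, Bf ω)) inferInstance
      = generateFrom p2 := by
    rw [show (inferInstance : MeasurableSpace (ℝ × (ℝ → ℝ))) = Prod.instMeasurableSpace
        from rfl, ← generateFrom_prod, MeasurableSpace.comap_generateFrom]
    congr 1
    ext S
    simp only [Set.mem_image, Set.mem_image2, Set.mem_setOf_eq, hp2def]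
    constructor
    · rintro ⟨r, ⟨u, hu, v, hv, rfl⟩, rfl⟩
      exact ⟨u, v, hu, hv, (Set.mk_preimage_prod _ _).symm⟩
    · rintro ⟨u, v, hu, hv, rfl⟩
      exact ⟨u ×ˢ v, ⟨u, hu, v, hv, rfl⟩, Set.mk_preimage_prod _ _⟩
  have hsets : IndepSets p1 p2 P := by
    rw [IndepSets_iff]
    rintro S T ⟨s, hs, rfl⟩ ⟨u, v, hu, hv, rfl⟩
    have key := indepFun_iff_measure_inter_preimage_eq_mul.mp h2
    have hA := key (u ×ˢ s) v (hu.prod hs) hv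
    have hA2 := key (u ×ˢ (Set.univ : Set ℝ)) v (hu.prod MeasurableSet.univ) hv
    have hB := indepFun_iff_measure_inter_preimage_eq_mul.mp h1 u s hu hs
    rw [Set.mk_preimage_prod] at hA hA2
    simp only [Set.preimage_univ, Set.inter_univ] at hA2
    have hset : ξ ⁻¹' s ∩ (X0 ⁻¹' u ∩ Bf ⁻¹' v) = (X0 ⁻¹' u ∩ ξ ⁻¹' s) ∩ Bf ⁻¹' v := by
      ext ω; simp only [Set.mem_inter_iff]; tauto
    have hLHS : P (ξ ⁻¹' s ∩ (X0 ⁻¹' u ∩ Bf ⁻¹' v))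
        = P (X0 ⁻¹' u) * P (ξ ⁻¹' s) * P (Bf ⁻¹' v) := by
      rw [hset, hA, hB]
    rw [hLHS, hA2]
    ring
  exact IndepSets.indep (hξ.comap_le) ((hX0.prodMk hBf).comap_le) hpi1 hpi2
    hgen1 hgen2 hsets

/-- Comparison of hitting probabilities for exponentials with different rates. -/
lemma exp_compare {Ω : Type*} [MeasurableSpace Ω] (P : Measure Ω) [IsProbabilityMeasure P]
    {κ₁ κ₂ : ℝ} (hκ₁ : 0 < κ₁) (hκ : κ₁ ≤ κ₂) (ξ₁ ξ₂ L : Ω → ℝ)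
    (hL : Measurable L) (hLnn : ∀ ω, 0 ≤ L ω)
    (hξ₁ : IsExponential P κ₁ ξ₁) (hξ₂ : IsExponential P κ₂ ξ₂)
    (hI₁ : IndepFun ξ₁ L P) (hI₂ : IndepFun ξ₂ L P) :
    P {ω | ξ₁ ω ≤ L ω} ≤ P {ω | ξ₂ ω ≤ L ω} := by
  have hae : ∀ᵐ l ∂(P.map L), 0 ≤ l := by
    rw [ae_iff]
    have hms : MeasurableSet {l : ℝ | ¬ 0 ≤ l} := by
      have he : {l : ℝ | ¬ 0 ≤ l} = Set.Iio 0 := by ext l; simp [not_le]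
      rw [he]; exact measurableSet_Iio
    rw [Measure.map_apply hL hms]
    have he2 : L ⁻¹' {l | ¬ 0 ≤ l} = ∅ := by
      ext ω; simp [hLnn ω]
    rw [he2, measure_empty]
  have key : ∀ (ξ : Ω → ℝ) (κ : ℝ), IsExponential P κ ξ → IndepFun ξ L P →
      P {ω | L ω < ξ ω} = ∫⁻ l, (P.map ξ) (Set.Ioi l) ∂(P.map L) := by
    intro ξ κ hξ hI
    have hmξ : Measurable ξ := hξ.1
    haveI : IsProbabilityMeasure (P.map ξ) := Measure.isProbabilityMeasure_map hmξ.aemeasurable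
    have hmap : P.map (fun ω => (L ω, ξ ω)) = (P.map L).prod (P.map ξ) :=
      (indepFun_iff_map_prod_eq_prod_map_map hL.aemeasurable hmξ.aemeasurable).mp hI.symm
    have hev : {ω | L ω < ξ ω}
        = (fun ω => (L ω, ξ ω)) ⁻¹' {p : ℝ × ℝ | p.1 < p.2} := rfl
    rw [hev, ← Measure.map_apply (hL.prodMk hmξ)
      (measurableSet_lt measurable_fst measurable_snd), hmap,
      Measure.prod_apply (measurableSet_lt measurable_fst measurable_snd)]
    have hpre : ∀ l : ℝ, Prod.mk l ⁻¹' {p : ℝ × ℝ | p.1 < p.2} = Set.Ioi l := by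
      intro l; ext x; simp [Set.mem_Ioi]
    simp_rw [hpre]
  have hmono : ∫⁻ l, (P.map ξ₂) (Set.Ioi l) ∂(P.map L)
      ≤ ∫⁻ l, (P.map ξ₁) (Set.Ioi l) ∂(P.map L) := by
    apply lintegral_mono_ae
    filter_upwards [hae] with l hl
    have e1 : (P.map ξ₁) (Set.Ioi l) = ENNReal.ofReal (Real.exp (-κ₁ * l)) := by
      rw [Measure.map_apply hξ₁.1 measurableSet_Ioi]
      rw [show ξ₁ ⁻¹' Set.Ioi l = {ω | l < ξ₁ ω} from rfl]
      exact hξ₁.2 l hl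
    have e2 : (P.map ξ₂) (Set.Ioi l) = ENNReal.ofReal (Real.exp (-κ₂ * l)) := by
      rw [Measure.map_apply hξ₂.1 measurableSet_Ioi]
      rw [show ξ₂ ⁻¹' Set.Ioi l = {ω | l < ξ₂ ω} from rfl]
      exact hξ₂.2 l hl
    rw [e1, e2]
    apply ENNReal.ofReal_le_ofReal
    apply Real.exp_le_exp.mpr
    nlinarith
  have hc1 : {ω | ξ₁ ω ≤ L ω} = {ω | L ω < ξ₁ ω}ᶜ := by
    ext ω; simp [not_lt]
  have hc2 : {ω | ξ₂ ω ≤ L ω} = {ω | L ω < ξ₂ ω}ᶜ := by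
    ext ω; simp [not_lt]
  rw [hc1, hc2, prob_compl_eq_one_sub (measurableSet_lt hL hξ₁.1),
    prob_compl_eq_one_sub (measurableSet_lt hL hξ₂.1),
    key ξ₁ κ₁ hξ₁ hI₁, key ξ₂ κ₂ hξ₂ hI₂]
  exact tsub_le_tsub_left hmono 1

end Prob

section Gamma

variable {Ω : Type*} [MeasurableSpace Ω] (P : Measure Ω) [IsProbabilityMeasure P]
  (B : ℝ → Ω → ℝ) (X0 ξ : Ω → ℝ) (α : ℝ)

/-- The feedback operator. -/
def gammaFn (Λ : ℝ → ℝ) (t : ℝ) : ℝ :=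
  (P {ω | elasticTau B X0 ξ α Λ ω ≤ (t : EReal)}).toReal

variable {P B X0 ξ α}

lemma elasticTau_eq (Λ : ℝ → ℝ) (ω : Ω) :
    elasticTau B X0 ξ α Λ ω
      = hitTime (reflTerm (pathY (X0 ω) (fun s => B s ω) α Λ)) (ξ ω) := rfl

lemma tau_event_eq (hα : 0 < α) (hBcont : ∀ ω, Continuous fun s => B s ω)
    {Λ : ℝ → ℝ} (hΛ : IsLossFn Λ) {t : ℝ} (ht : 0 ≤ t) :
    {ω | elasticTau B X0 ξ α Λ ω ≤ (t : EReal)}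
      = {ω | ξ ω ≤ psiFn α Λ t (X0 ω, fun s => B s ω)} := by
  ext ω
  simp only [Set.mem_setOf_eq]
  rw [elasticTau_eq, hitTime_le_iff (reflTerm_mono hα hΛ.2.2.2 (hBcont ω))
    (reflTerm_rightCont hα hΛ (hBcont ω) t) ht,
    psiFn_eq_reflTerm hα hΛ (hBcont ω) ht]

lemma lfn_measurable (hX0meas : Measurable X0) (hBmeas : ∀ t, Measurable (B t))
    (Λ : ℝ → ℝ) (t : ℝ) :
    Measurable (fun ω => psiFn α Λ t (X0 ω, fun s => B s ω)) :=
  (psiFn_measurable α Λ t).comp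
    (hX0meas.prodMk (measurable_pi_lambda _ hBmeas))

lemma tau_event_measurable (hα : 0 < α) (hBcont : ∀ ω, Continuous fun s => B s ω)
    (hX0meas : Measurable X0) (hBmeas : ∀ t, Measurable (B t)) (hξmeas : Measurable ξ)
    {Λ : ℝ → ℝ} (hΛ : IsLossFn Λ) {t : ℝ} (ht : 0 ≤ t) :
    MeasurableSet {ω | elasticTau B X0 ξ α Λ ω ≤ (t : EReal)} := by
  rw [tau_event_eq hα hBcont hΛ ht]
  exact measurableSet_le hξmeas (lfn_measurable hX0meas hBmeas Λ t)

lemma gammaFn_nonneg (Λ : ℝ → ℝ) (t : ℝ) : 0 ≤ gammaFn P B X0 ξ α Λ t :=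
  ENNReal.toReal_nonneg

lemma gammaFn_le_one (Λ : ℝ → ℝ) (t : ℝ) : gammaFn P B X0 ξ α Λ t ≤ 1 := by
  have h := prob_le_one (μ := P) (s := {ω | elasticTau B X0 ξ α Λ ω ≤ (t : EReal)})
  have := ENNReal.toReal_mono ENNReal.one_ne_top h
  simpa [gammaFn] using this

lemma gammaFn_of_neg (Λ : ℝ → ℝ) {t : ℝ} (ht : t < 0) : gammaFn P B X0 ξ α Λ t = 0 := by
  have hempty : {ω | elasticTau B X0 ξ α Λ ω ≤ (t : EReal)} = ∅ := by
    ext ω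
    simp only [Set.mem_setOf_eq, Set.mem_empty_iff_false, iff_false]
    intro h
    have h0 : (0 : EReal) ≤ (t : EReal) := le_trans (by rw [elasticTau_eq]; exact hitTime_nonneg _ _) h
    rw [show (0 : EReal) = ((0 : ℝ) : EReal) from rfl, EReal.coe_le_coe_iff] at h0
    linarith
  rw [gammaFn, hempty, measure_empty]
  simp

lemma gammaFn_monotone (Λ : ℝ → ℝ) : Monotone (gammaFn P B X0 ξ α Λ) := by
  intro s t hst
  apply ENNReal.toReal_mono (measure_ne_top P _)
  apply measure_mono
  intro ω hω
  simp only [Set.mem_setOf_eq] at hω ⊢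
  exact le_trans hω (EReal.coe_le_coe_iff.mpr hst)

lemma gammaFn_mono_lam (hα : 0 < α) (hBcont : ∀ ω, Continuous fun s => B s ω)
    {Λ Λ' : ℝ → ℝ} (hle : ∀ s, Λ s ≤ Λ' s) (hΛ'1 : ∀ s, Λ' s ≤ 1) (t : ℝ) :
    gammaFn P B X0 ξ α Λ t ≤ gammaFn P B X0 ξ α Λ' t := by
  apply ENNReal.toReal_mono (measure_ne_top P _)
  apply measure_mono
  intro ω hω
  simp only [Set.mem_setOf_eq] at hω ⊢
  rw [elasticTau_eq]
  exact le_trans (hitTime_anti hα hle hΛ'1 (hBcont ω) (ξ ω)) hω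

lemma monotone_rightCont_of_seq {f : ℝ → ℝ} (hf : Monotone f) {t : ℝ}
    (h : Tendsto (fun n : ℕ => f (t + 1 / ((n : ℝ) + 1))) atTop (𝓝 (f t))) :
    ContinuousWithinAt f (Set.Ici t) t := by
  rw [Metric.continuousWithinAt_iff]
  intro ε hε
  obtain ⟨N, hN⟩ := Metric.tendsto_atTop.mp h ε hε
  have hd := hN N le_rfl
  refine ⟨1 / ((N : ℝ) + 1), by positivity, fun x hx hdx => ?_⟩
  have hxt : t ≤ x := hx
  have hxlt : x ≤ t + 1 / ((N : ℝ) + 1) := by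
    rw [Real.dist_eq, abs_of_nonneg (by linarith)] at hdx
    linarith
  have h1 : f t ≤ f x := hf hxt
  have h2 : f x ≤ f (t + 1 / ((N : ℝ) + 1)) := hf hxlt
  rw [Real.dist_eq] at hd ⊢
  rw [abs_of_nonneg (by linarith)]
  have h3 := (abs_lt.mp hd).2
  linarith

lemma gammaFn_rightCont (hα : 0 < α) (hBcont : ∀ ω, Continuous fun s => B s ω)
    (hX0meas : Measurable X0) (hBmeas : ∀ t, Measurable (B t)) (hξmeas : Measurable ξ)
    {Λ : ℝ → ℝ} (hΛ : IsLossFn Λ) (t : ℝ) :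
    ContinuousWithinAt (gammaFn P B X0 ξ α Λ) (Set.Ici t) t := by
  rcases lt_or_ge t 0 with ht | ht
  · rw [Metric.continuousWithinAt_iff]
    intro ε hε
    refine ⟨-t, by linarith, fun x hx hdx => ?_⟩
    have hxt : t ≤ x := hx
    have hx0 : x < 0 := by
      rw [Real.dist_eq, abs_of_nonneg (by linarith)] at hdx
      linarith
    rw [gammaFn_of_neg Λ hx0, gammaFn_of_neg Λ ht]
    simpa using hε
  · apply monotone_rightCont_of_seq (gammaFn_monotone Λ)
    have hpos : ∀ n : ℕ, (0 : ℝ) ≤ t + 1 / ((n : ℝ) + 1) := by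
      intro n
      have : (0 : ℝ) < 1 / ((n : ℝ) + 1) := by positivity
      linarith
    have hanti : Antitone (fun n : ℕ =>
        {ω | elasticTau B X0 ξ α Λ ω ≤ ((t + 1 / ((n : ℝ) + 1) : ℝ) : EReal)}) := by
      intro n m hnm ω hω
      simp only [Set.mem_setOf_eq] at hω ⊢
      refine le_trans hω ?_
      rw [EReal.coe_le_coe_iff]
      have h1 : 1 / ((m : ℝ) + 1) ≤ 1 / ((n : ℝ) + 1) := by
        apply one_div_le_one_div_of_le (by positivity)
        have : (n : ℝ) ≤ (m : ℝ) := by exact_mod_cast hnm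
        linarith
      linarith
    have hiInter : (⋂ n : ℕ, {ω | elasticTau B X0 ξ α Λ ω
        ≤ ((t + 1 / ((n : ℝ) + 1) : ℝ) : EReal)})
        = {ω | elasticTau B X0 ξ α Λ ω ≤ (t : EReal)} := by
      ext ω
      rw [Set.mem_iInter]
      have hm := reflTerm_mono (c := X0 ω) (b := fun s => B s ω) hα hΛ.2.2.2 (hBcont ω)
      have hrc := reflTerm_rightCont (c := X0 ω) (b := fun s => B s ω) hα hΛ (hBcont ω) t
      simp only [Set.mem_setOf_eq, elasticTau_eq]
      constructor
      · intro h
        rw [hitTime_le_iff hm hrc ht]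
        rw [← le_rightLim_iff_seq hm hrc]
        intro n
        have := h n
        rwa [hitTime_le_iff hm
          (reflTerm_rightCont hα hΛ (hBcont ω) (t + 1 / ((n : ℝ) + 1))) (hpos n)] at this
      · intro h n
        refine le_trans h ?_
        rw [EReal.coe_le_coe_iff]
        have : (0 : ℝ) < 1 / ((n : ℝ) + 1) := by positivity
        linarith
    have hmeas : ∀ n : ℕ, NullMeasurableSet {ω | elasticTau B X0 ξ α Λ ω
        ≤ ((t + 1 / ((n : ℝ) + 1) : ℝ) : EReal)} P :=
      fun n => (tau_event_measurable hα hBcont hX0meas hBmeas hξmeas hΛ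
        (hpos n)).nullMeasurableSet
    have htm := MeasureTheory.tendsto_measure_iInter_atTop (μ := P) hmeas hanti
      ⟨0, measure_ne_top P _⟩
    rw [hiInter] at htm
    have := (ENNReal.tendsto_toReal (measure_ne_top P
      {ω | elasticTau B X0 ξ α Λ ω ≤ (t : EReal)})).comp htm
    exact this

end Gamma

section Lattice

variable {Ω : Type*} [MeasurableSpace Ω] (P : Measure Ω) [IsProbabilityMeasure P]
  (B : ℝ → Ω → ℝ) (X0 ξ : Ω → ℝ) (α : ℝ)

/-- The set of supersolutions of the elastic feedback problem. -/
def solSet : Set (ℝ → ℝ) :=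
  {Λ' | IsLossFn Λ' ∧ ∀ t : ℝ, 0 ≤ t → gammaFn P B X0 ξ α Λ' t ≤ Λ' t}

/-- Pointwise infimum of all supersolutions. -/
def LamStar : ℝ → ℝ := fun t => sInf ((fun Λ' => Λ' t) '' solSet P B X0 ξ α)

variable {P B X0 ξ α}

lemma solSet_bddBelow (t : ℝ) : BddBelow ((fun Λ' => Λ' t) '' solSet P B X0 ξ α) := by
  refine ⟨0, ?_⟩
  rintro y ⟨Λ', hΛ', rfl⟩
  exact lossFn_nonneg hΛ'.1 t

section WithMember

variable (hα : 0 < α) (hBcont : ∀ ω, Continuous fun s => B s ω)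
  (hX0meas : Measurable X0) (hBmeas : ∀ t, Measurable (B t)) (hξmeas : Measurable ξ)
  {Λ₀ : ℝ → ℝ} (hΛ₀ : Λ₀ ∈ solSet P B X0 ξ α)

include hΛ₀

lemma solSet_nonempty_image (t : ℝ) :
    ((fun Λ' => Λ' t) '' solSet P B X0 ξ α).Nonempty := ⟨Λ₀ t, Λ₀, hΛ₀, rfl⟩

lemma LamStar_le_mem {Λ' : ℝ → ℝ} (hΛ' : Λ' ∈ solSet P B X0 ξ α) (t : ℝ) :
    LamStar P B X0 ξ α t ≤ Λ' t :=
  csInf_le (solSet_bddBelow t) ⟨Λ', hΛ', rfl⟩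

lemma LamStar_nonneg (t : ℝ) : 0 ≤ LamStar P B X0 ξ α t :=
  le_csInf (solSet_nonempty_image hΛ₀ t)
    (by rintro y ⟨Λ', hΛ', rfl⟩; exact lossFn_nonneg hΛ'.1 t)

lemma LamStar_lossFn : IsLossFn (LamStar P B X0 ξ α) := by
  refine ⟨?_, ?_, ?_, ?_⟩
  · intro s t hst
    refine le_csInf (solSet_nonempty_image hΛ₀ t) ?_
    rintro y ⟨Λ', hΛ', rfl⟩
    exact le_trans (LamStar_le_mem hΛ₀ hΛ' s) (hΛ'.1.1 hst)
  · intro t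
    rw [Metric.continuousWithinAt_iff]
    intro ε hε
    have h1 : LamStar P B X0 ξ α t < LamStar P B X0 ξ α t + ε / 2 := by linarith
    obtain ⟨y, ⟨Λ', hΛ', rfl⟩, hy⟩ :=
      exists_lt_of_csInf_lt (solSet_nonempty_image hΛ₀ t) h1
    obtain ⟨δ, hδ, hδ'⟩ := Metric.continuousWithinAt_iff.mp (hΛ'.1.2.1 t) (ε / 2)
      (by linarith)
    refine ⟨δ, hδ, fun x hx hdx => ?_⟩
    have hxt : t ≤ x := hx
    have hmono : LamStar P B X0 ξ α t ≤ LamStar P B X0 ξ α x := by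
      refine le_csInf (solSet_nonempty_image hΛ₀ x) ?_
      rintro y ⟨Λ'', hΛ'', rfl⟩
      exact le_trans (LamStar_le_mem hΛ₀ hΛ'' t) (hΛ''.1.1 hxt)
    have hup : LamStar P B X0 ξ α x ≤ Λ' x := LamStar_le_mem hΛ₀ hΛ' x
    have hΛ'x := hδ' hx hdx
    rw [Real.dist_eq] at hΛ'x ⊢
    have h2 := (abs_lt.mp hΛ'x).2
    rw [abs_of_nonneg (by linarith)]
    linarith
  · intro t ht
    refine le_antisymm ?_ (LamStar_nonneg hΛ₀ t)
    rw [← hΛ₀.1.2.2.1 t ht]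
    exact LamStar_le_mem hΛ₀ hΛ₀ t
  · intro t
    exact le_trans (LamStar_le_mem hΛ₀ hΛ₀ t) (hΛ₀.1.2.2.2 t)

include hα hBcont

lemma gammaFn_LamStar_le (t : ℝ) :
    gammaFn P B X0 ξ α (LamStar P B X0 ξ α) t ≤ LamStar P B X0 ξ α t := by
  rcases lt_or_ge t 0 with ht | ht
  · rw [gammaFn_of_neg _ ht]
    exact LamStar_nonneg hΛ₀ t
  · refine le_csInf (solSet_nonempty_image hΛ₀ t) ?_
    rintro y ⟨Λ', hΛ', rfl⟩
    refine le_trans (gammaFn_mono_lam hα hBcont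
      (fun s => LamStar_le_mem hΛ₀ hΛ' s) hΛ'.1.2.2.2 t) (hΛ'.2 t ht)

include hX0meas hBmeas hξmeas

lemma LamTwoStar_mem :
    gammaFn P B X0 ξ α (LamStar P B X0 ξ α) ∈ solSet P B X0 ξ α := by
  constructor
  · exact ⟨gammaFn_monotone _,
      fun t => gammaFn_rightCont hα hBcont hX0meas hBmeas hξmeas
        (LamStar_lossFn hΛ₀) t,
      fun t ht => gammaFn_of_neg _ ht, fun t => gammaFn_le_one _ t⟩
  · intro t ht
    calc gammaFn P B X0 ξ α (gammaFn P B X0 ξ α (LamStar P B X0 ξ α)) t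
        ≤ gammaFn P B X0 ξ α (LamStar P B X0 ξ α) t :=
          gammaFn_mono_lam hα hBcont (fun s => gammaFn_LamStar_le hα hBcont hΛ₀ s)
            (fun s => (LamStar_lossFn hΛ₀).2.2.2 s) t
    _ = _ := rfl

lemma LamStar_fixed (t : ℝ) :
    LamStar P B X0 ξ α t = gammaFn P B X0 ξ α (LamStar P B X0 ξ α) t :=
  le_antisymm
    (LamStar_le_mem hΛ₀ (LamTwoStar_mem hα hBcont hX0meas hBmeas hξmeas hΛ₀) t)
    (gammaFn_LamStar_le hα hBcont hΛ₀ t)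

lemma LamStar_elasticSol : IsElasticSol P B X0 ξ α (LamStar P B X0 ξ α) :=
  ⟨LamStar_lossFn hΛ₀,
    fun t _ => LamStar_fixed hα hBcont hX0meas hBmeas hξmeas hΛ₀ t⟩

end WithMember

end Lattice

end Aux

/-- for `0 < κ₁ < κ₂`, the minimal solutions of the elastic feedback problem
satisfy `Λ^{κ₁}_t ≤ Λ^{κ₂}_t` for all `t ≥ 0`. -/
theorem statement_11 {Ω : Type*} [MeasurableSpace Ω] (P : Measure Ω) [IsProbabilityMeasure P]
    (α κ₁ κ₂ : ℝ) (hα : 0 < α) (hκ₁ : 0 < κ₁) (hκ₁₂ : κ₁ < κ₂)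
    (B : ℝ → Ω → ℝ) (X0 ξ₁ ξ₂ : Ω → ℝ)
    (hB : IsStandardBM P B)
    (hX0meas : Measurable X0) (hX0nonneg : ∀ ω, 0 ≤ X0 ω)
    (hξ₁ : IsExponential P κ₁ ξ₁) (hξ₂ : IsExponential P κ₂ ξ₂)
    (hindepX0ξ₁ : IndepFun X0 ξ₁ P) (hindepX0ξ₂ : IndepFun X0 ξ₂ P)
    (hindepB₁ : IndepFun (fun ω => (X0 ω, ξ₁ ω)) (fun ω => fun t => B t ω) P)
    (hindepB₂ : IndepFun (fun ω => (X0 ω, ξ₂ ω)) (fun ω => fun t => B t ω) P)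
    (Λ₁ Λ₂ : ℝ → ℝ)
    (h₁ : IsMinimalElasticSol P B X0 ξ₁ α Λ₁)
    (h₂ : IsMinimalElasticSol P B X0 ξ₂ α Λ₂) :
    ∀ t : ℝ, 0 ≤ t → Λ₁ t ≤ Λ₂ t := by
  classical
  obtain ⟨-, hBcont, hBmeas, -, -⟩ := hB
  have hΛ₂loss : IsLossFn Λ₂ := h₂.1.1
  have hBfmeas : Measurable (fun ω => fun t => B t ω) := measurable_pi_lambda _ hBmeas
  have hind₁ : IndepFun ξ₁ (fun ω => (X0 ω, fun t => B t ω)) P :=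
    Aux.indep_xi_pair P X0 ξ₁ _ hX0meas hξ₁.1 hBfmeas hindepX0ξ₁ hindepB₁
  have hind₂ : IndepFun ξ₂ (fun ω => (X0 ω, fun t => B t ω)) P :=
    Aux.indep_xi_pair P X0 ξ₂ _ hX0meas hξ₂.1 hBfmeas hindepX0ξ₂ hindepB₂
  have key : ∀ u : ℝ, 0 ≤ u → Aux.gammaFn P B X0 ξ₁ α Λ₂ u ≤ Λ₂ u := by
    intro u hu
    have hLmeas : Measurable (fun ω => Aux.psiFn α Λ₂ u (X0 ω, fun s => B s ω)) :=
      Aux.lfn_measurable (α := α) hX0meas hBmeas Λ₂ u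
    have hIndL : ∀ {ξ : Ω → ℝ}, IndepFun ξ (fun ω => (X0 ω, fun t => B t ω)) P →
        IndepFun ξ (fun ω => Aux.psiFn α Λ₂ u (X0 ω, fun s => B s ω)) P := by
      intro ξ h
      have h2 := h.comp measurable_id (Aux.psiFn_measurable α Λ₂ u)
      simpa [Function.comp_def] using h2
    have hcomp := Aux.exp_compare P hκ₁ hκ₁₂.le ξ₁ ξ₂
      (fun ω => Aux.psiFn α Λ₂ u (X0 ω, fun s => B s ω)) hLmeas
      (fun ω => Aux.psiFn_nonneg _ _ _ _) hξ₁ hξ₂ (hIndL hind₁) (hIndL hind₂)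
    calc Aux.gammaFn P B X0 ξ₁ α Λ₂ u
        = (P {ω | ξ₁ ω ≤ Aux.psiFn α Λ₂ u (X0 ω, fun s => B s ω)}).toReal := by
          rw [Aux.gammaFn, Aux.tau_event_eq hα hBcont hΛ₂loss hu]
    _ ≤ (P {ω | ξ₂ ω ≤ Aux.psiFn α Λ₂ u (X0 ω, fun s => B s ω)}).toReal :=
          ENNReal.toReal_mono (measure_ne_top P _) hcomp
    _ = Aux.gammaFn P B X0 ξ₂ α Λ₂ u := by
          rw [Aux.gammaFn, Aux.tau_event_eq hα hBcont hΛ₂loss hu]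
    _ = Λ₂ u := (h₂.1.2 u hu).symm
  have hΛ₂mem : Λ₂ ∈ Aux.solSet P B X0 ξ₁ α := ⟨hΛ₂loss, key⟩
  have hsol : IsElasticSol P B X0 ξ₁ α (Aux.LamStar P B X0 ξ₁ α) :=
    Aux.LamStar_elasticSol hα hBcont hX0meas hBmeas hξ₁.1 hΛ₂mem
  intro t ht
  exact le_trans (h₁.2 _ hsol t ht) (Aux.LamStar_le_mem hΛ₂mem hΛ₂mem t)


end
end

section
/- Every solution Λ of the elastic feedback problem satisfies lim_{t→∞} Λ_t = 1; equivalently, the elastic stopping time τ is almost surely finite. -/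
open MeasureTheory ProbabilityTheory Filter Topology Set

noncomputable section

/-! ### Auxiliary lemmas for statement 12 -/

section Statement12Aux

open ENNReal

lemma aux_pdf_le (v : NNReal) (x : ℝ) : gaussianPDFReal 0 v x ≤ (Real.sqrt (2*Real.pi*v))⁻¹ := by
  unfold gaussianPDFReal
  have h1 : Real.exp (-(x-0)^2/(2*v)) ≤ 1 := by
    rw [Real.exp_le_one_iff, neg_div]
    have : (0:ℝ) ≤ (x-0)^2/(2*v) := by positivity
    linarith
  have h2 : (0:ℝ) ≤ (Real.sqrt (2*Real.pi*v))⁻¹ := by positivity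
  calc (Real.sqrt (2*Real.pi*v))⁻¹ * Real.exp (-(x-0)^2/(2*v))
      ≤ (Real.sqrt (2*Real.pi*v))⁻¹ * 1 := mul_le_mul_of_nonneg_left h1 h2
    _ = _ := mul_one _

lemma aux_gauss_half {v : NNReal} (hv : v ≠ 0) : gaussianReal 0 v (Set.Ici 0) = 1/2 := by
  have hmap : (gaussianReal 0 v).map (fun x => -x) = gaussianReal 0 v := by
    have := gaussianReal_map_const_mul (μ := 0) (v := v) (-1)
    simp only [neg_one_mul, mul_zero] at this
    convert this using 2
    norm_num
  have hb : gaussianReal 0 v (Set.Iic 0) = gaussianReal 0 v (Set.Ici 0) := by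
    conv_rhs => rw [← hmap]
    rw [Measure.map_apply measurable_neg measurableSet_Ici]
    congr 1
    ext x; simp
  have hz : gaussianReal 0 v {(0:ℝ)} = 0 :=
    (gaussianReal_absolutelyContinuous 0 hv) (measure_singleton _)
  have hu : gaussianReal 0 v (Set.Ici 0 ∪ Set.Iic 0) + gaussianReal 0 v (Set.Ici 0 ∩ Set.Iic 0)
      = gaussianReal 0 v (Set.Ici 0) + gaussianReal 0 v (Set.Iic 0) :=
    measure_union_add_inter _ measurableSet_Iic
  have h1 : (Set.Ici (0:ℝ) ∪ Set.Iic 0) = Set.univ := by ext x; simp [le_total 0 x]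
  have h2 : (Set.Ici (0:ℝ) ∩ Set.Iic 0) = {(0:ℝ)} := by ext x; simp [le_antisymm_iff, and_comm]
  rw [h1, h2, hz, measure_univ, add_zero, hb] at hu
  have h2ne : (2:ENNReal) ≠ 0 := by norm_num
  have h2top : (2:ENNReal) ≠ ⊤ := by norm_num
  rw [ENNReal.eq_div_iff h2ne h2top, two_mul]
  exact hu.symm

lemma aux_gauss_G1 {v : NNReal} (hv : v ≠ 0) {m : ℝ} (hm : 0 ≤ m) :
    gaussianReal 0 v (Set.Ioi (-m)) ≤ 1/2 + ENNReal.ofReal (m * (Real.sqrt (2*Real.pi*v))⁻¹) := by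
  have hsub : Set.Ioi (-m) ⊆ Set.Ioo (-m) 0 ∪ Set.Ici 0 := by
    intro x hx
    rcases lt_or_ge x 0 with h | h
    · exact Or.inl ⟨hx, h⟩
    · exact Or.inr h
  calc gaussianReal 0 v (Set.Ioi (-m)) ≤ gaussianReal 0 v (Set.Ioo (-m) 0 ∪ Set.Ici 0) :=
        measure_mono hsub
    _ ≤ gaussianReal 0 v (Set.Ioo (-m) 0) + gaussianReal 0 v (Set.Ici 0) := measure_union_le _ _
    _ ≤ ENNReal.ofReal (m * (Real.sqrt (2*Real.pi*v))⁻¹) + 1/2 := by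
        gcongr
        · rw [gaussianReal_apply 0 hv]
          have hb : ∀ x ∈ Set.Ioo (-m) 0,
              gaussianPDF 0 v x ≤ ENNReal.ofReal ((Real.sqrt (2*Real.pi*v))⁻¹) := by
            intro x _
            exact ENNReal.ofReal_le_ofReal (aux_pdf_le v x)
          calc ∫⁻ x in Set.Ioo (-m) 0, gaussianPDF 0 v x
              ≤ ∫⁻ _ in Set.Ioo (-m) 0, ENNReal.ofReal ((Real.sqrt (2*Real.pi*v))⁻¹) :=
                setLIntegral_mono measurable_const (fun x hx => hb x hx)
            _ = ENNReal.ofReal ((Real.sqrt (2*Real.pi*v))⁻¹) * volume (Set.Ioo (-m) 0) := by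
                rw [setLIntegral_const]
            _ ≤ ENNReal.ofReal (m * (Real.sqrt (2*Real.pi*v))⁻¹) := by
                rw [Real.volume_Ioo, ← ENNReal.ofReal_mul (by positivity)]
                apply ENNReal.ofReal_le_ofReal
                rw [mul_comm]
                gcongr
                linarith
        · exact le_of_eq (aux_gauss_half hv)
    _ = _ := add_comm _ _

lemma aux_gauss_G2 {v : NNReal} (hv : v ≠ 0) {R : ℝ} (hR : 0 < R) :
    gaussianReal 0 v (Set.Ioi R) ≤ ENNReal.ofReal (2 * Real.sqrt v / R) := by
  rw [gaussianReal_apply_eq_integral 0 hv]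
  apply ENNReal.ofReal_le_ofReal
  have hv0 : (0:ℝ) < v := lt_of_le_of_ne (NNReal.coe_nonneg v) (by exact_mod_cast hv.symm)
  set a : ℝ := R / (2*v) with ha
  have ha0 : 0 < a := by positivity
  set C : ℝ := (Real.sqrt (2*Real.pi*v))⁻¹ with hC
  have hC0 : 0 < C := by positivity
  have hpt : ∀ x ∈ Set.Ioi R, gaussianPDFReal 0 v x ≤ C * Real.exp (-(a*x)) := by
    intro x hx
    have hxR : R < x := hx
    unfold gaussianPDFReal
    rw [← hC]
    apply mul_le_mul_of_nonneg_left _ hC0.le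
    apply Real.exp_le_exp.2
    rw [ha, sub_zero, neg_div]
    have hx0 : 0 < x := hR.trans hxR
    rw [neg_le_neg_iff]
    rw [div_mul_eq_mul_div, div_le_div_iff_of_pos_right (by positivity)]
    nlinarith [mul_le_mul_of_nonneg_left hxR.le hx0.le]
  have hint2 : IntegrableOn (fun x => C * Real.exp (-(a*x))) (Set.Ioi R) := by
    apply Integrable.const_mul
    have := exp_neg_integrableOn_Ioi R ha0
    simpa [mul_comm, IntegrableOn] using this
  have hint1 : IntegrableOn (gaussianPDFReal 0 v) (Set.Ioi R) :=
    (integrable_gaussianPDFReal 0 v).integrableOn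
  calc ∫ x in Set.Ioi R, gaussianPDFReal 0 v x
      ≤ ∫ x in Set.Ioi R, C * Real.exp (-(a*x)) :=
        setIntegral_mono_on hint1 hint2 measurableSet_Ioi hpt
    _ = C * ∫ x in Set.Ioi R, Real.exp (-(a*x)) := by rw [integral_const_mul]
    _ = C * (a⁻¹ * ∫ x in Set.Ioi (a*R), Real.exp (-x)) := by
        congr 1
        rw [← smul_eq_mul, ← integral_comp_mul_left_Ioi (fun y => Real.exp (-y)) R ha0]
    _ = C * (a⁻¹ * Real.exp (-(a*R))) := by rw [integral_exp_neg_Ioi]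
    _ ≤ C * (a⁻¹ * 1) := by
        gcongr
        rw [Real.exp_le_one_iff]
        have : 0 < a * R := mul_pos ha0 hR
        linarith
    _ ≤ 2 * Real.sqrt v / R := by
        rw [mul_one, ha, hC]
        rw [inv_div]
        have h1 : (Real.sqrt (2*Real.pi*v))⁻¹ ≤ (Real.sqrt v)⁻¹ := by
          apply inv_anti₀ (Real.sqrt_pos.2 hv0)
          apply Real.sqrt_le_sqrt
          nlinarith [Real.pi_gt_three]
        calc (Real.sqrt (2*Real.pi*v))⁻¹ * (2*v/R) ≤ (Real.sqrt v)⁻¹ * (2*v/R) := by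
              apply mul_le_mul_of_nonneg_right h1 (by positivity)
          _ = 2 * ((Real.sqrt v)⁻¹ * v) / R := by ring
          _ = 2 * Real.sqrt v / R := by
              rw [← Real.sqrt_mul_self hv0.le]
              field_simp
              rw [Real.sq_sqrt (Real.sqrt_nonneg _)]

def tseq (ε c : ℝ) : ℕ → ℝ
  | 0 => 0
  | n+1 => tseq ε c n + ((c + 2*Real.sqrt (tseq ε c n)/ε)/ε)^2

lemma tseq_nonneg (ε c : ℝ) (n : ℕ) : 0 ≤ tseq ε c n := by
  induction n with
  | zero => simp [tseq]
  | succ n ih => rw [tseq]; positivity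

lemma tseq_mono (ε c : ℝ) : Monotone (tseq ε c) := by
  apply monotone_nat_of_le_succ
  intro n
  rw [tseq]
  nlinarith [sq_nonneg ((c + 2*Real.sqrt (tseq ε c n)/ε)/ε)]

lemma tseq_pos {ε c : ℝ} (hε : 0 < ε) (hc : 0 < c) {n : ℕ} (hn : 0 < n) :
    0 < tseq ε c n := by
  have h1 : 0 < tseq ε c 1 := by
    rw [tseq]
    simp [tseq]
    positivity
  exact h1.trans_le (tseq_mono ε c hn)

lemma aux_gauss_step {m ε : ℝ} (hm : 0 < m) (hε : 0 < ε) :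
    gaussianReal 0 (Real.toNNReal ((m/ε)^2)) (Set.Ioi (-m)) ≤ 1/2 + ENNReal.ofReal ε := by
  have hv : (0:ℝ) < (m/ε)^2 := by positivity
  have hvne : Real.toNNReal ((m/ε)^2) ≠ 0 := by
    simp [Real.toNNReal_eq_zero, not_le, hv]
    exact ⟨hm.ne', hε.ne'⟩
  refine (aux_gauss_G1 hvne hm.le).trans ?_
  gcongr
  have hcoe : ((Real.toNNReal ((m/ε)^2) : NNReal) : ℝ) = (m/ε)^2 := Real.coe_toNNReal _ hv.le
  rw [hcoe]
  have h1 : m/ε ≤ Real.sqrt (2*Real.pi*((m/ε)^2)) := by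
    rw [show (2*Real.pi*((m/ε)^2)) = (2*Real.pi)*((m/ε)^2) by ring]
    calc m/ε = Real.sqrt ((m/ε)^2) := (Real.sqrt_sq (by positivity)).symm
      _ ≤ _ := Real.sqrt_le_sqrt (by nlinarith [Real.pi_gt_three, sq_nonneg (m/ε)])
  have h2 : (Real.sqrt (2*Real.pi*((m/ε)^2)))⁻¹ ≤ ε/m := by
    rw [show ε/m = (m/ε)⁻¹ by rw [inv_div]]
    exact inv_anti₀ (by positivity) h1
  calc m * (Real.sqrt (2*Real.pi*((m/ε)^2)))⁻¹ ≤ m * (ε/m) :=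
      mul_le_mul_of_nonneg_left h2 hm.le
    _ = ε := by field_simp

lemma aux_core {Ω : Type*} [MeasurableSpace Ω] {P : Measure Ω} [IsProbabilityMeasure P]
    {B : ℝ → Ω → ℝ} (hB : IsStandardBM P B) {ε c : ℝ} (hε : 0 < ε) (hc : 0 < c) (n : ℕ) :
    P {ω | ∀ i : Fin n, -c < B (tseq ε c ((i:ℕ)+1)) ω}
      ≤ (1/2 + ENNReal.ofReal ε)^n + n * ENNReal.ofReal ε := by
  classical
  set t := tseq ε c with ht
  set R : ℕ → ℝ := fun j => 2 * Real.sqrt (t j) / ε with hR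
  have hmono : Monotone t := tseq_mono ε c
  have ht0 : t 0 = 0 := rfl
  have hΔmeas : ∀ j : ℕ, Measurable (fun ω => B (t (j+1)) ω - B (t j) ω) :=
    fun j => (hB.2.2.1 _).sub (hB.2.2.1 _)
  have hindep := hB.2.2.2.2 n t hmono (le_of_eq ht0.symm)
  set E1 : Set Ω := ⋂ i : Fin n,
    (fun ω => B (t ((i:ℕ)+1)) ω - B (t (i:ℕ)) ω) ⁻¹' (Set.Ioi (-(c + R (i:ℕ)))) with hE1
  set E2 : Fin n → Set Ω := fun i => (B (t (i:ℕ))) ⁻¹' (Set.Ioi (R (i:ℕ))) with hE2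
  have hsub : {ω | ∀ i : Fin n, -c < B (t ((i:ℕ)+1)) ω} ⊆ E1 ∪ ⋃ i : Fin n, E2 i := by
    intro ω hω
    by_cases h2 : ∃ i : Fin n, R (i:ℕ) < B (t (i:ℕ)) ω
    · exact Or.inr (Set.mem_iUnion.2 ⟨h2.choose, h2.choose_spec⟩)
    · push_neg at h2
      refine Or.inl (Set.mem_iInter.2 (fun i => ?_))
      simp only [Set.mem_preimage, Set.mem_Ioi]
      have h3 := hω i
      have h4 := h2 i
      linarith
  have hfac : ∀ i : Fin n,
      P ((fun ω => B (t ((i:ℕ)+1)) ω - B (t (i:ℕ)) ω) ⁻¹' (Set.Ioi (-(c + R (i:ℕ)))))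
        ≤ 1/2 + ENNReal.ofReal ε := by
    intro i
    rw [← Measure.map_apply (hΔmeas (i:ℕ)) measurableSet_Ioi,
      hB.2.2.2.1 (t (i:ℕ)) (t ((i:ℕ)+1)) (tseq_nonneg ε c _) (hmono (Nat.le_succ _))]
    have hdiff : t ((i:ℕ)+1) - t (i:ℕ) = ((c + R (i:ℕ))/ε)^2 := by
      rw [ht]
      show tseq ε c ((i:ℕ)+1) - tseq ε c (i:ℕ) = _
      rw [tseq]
      simp only [hR, ht]
      ring_nf
    rw [hdiff]
    exact aux_gauss_step (by positivity) hε
  have hE1bound : P E1 ≤ (1/2 + ENNReal.ofReal ε)^n := by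
    have := hindep.meas_iInter (s := fun i : Fin n =>
      (fun ω => B (t ((i:ℕ)+1)) ω - B (t (i:ℕ)) ω) ⁻¹' (Set.Ioi (-(c + R (i:ℕ)))))
      (fun i => ⟨Set.Ioi (-(c + R (i:ℕ))), measurableSet_Ioi, rfl⟩)
    rw [hE1, this]
    calc ∏ i : Fin n, P _ ≤ ∏ _i : Fin n, (1/2 + ENNReal.ofReal ε) :=
        Finset.prod_le_prod' (fun i _ => hfac i)
      _ = (1/2 + ENNReal.ofReal ε)^n := by
        rw [Finset.prod_const, Finset.card_univ, Fintype.card_fin]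
  have hE2bound : ∀ i : Fin n, P (E2 i) ≤ ENNReal.ofReal ε := by
    intro i
    rcases Nat.eq_zero_or_pos (i:ℕ) with h0 | hpos
    · have : E2 i = ∅ := by
        rw [hE2]
        ext ω
        simp only [Set.mem_preimage, Set.mem_Ioi, Set.mem_empty_iff_false, iff_false, not_lt, h0]
        rw [ht0, hB.1 ω]
        simp [hR, h0, ht0]
      rw [this]
      simp
    · have htpos : 0 < t (i:ℕ) := tseq_pos hε hc hpos
      have hRpos : 0 < R (i:ℕ) := by rw [hR]; positivity
      have hlaw : Measure.map (B (t (i:ℕ))) P = gaussianReal 0 (Real.toNNReal (t (i:ℕ))) := by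
        have h := hB.2.2.2.1 0 (t (i:ℕ)) le_rfl (tseq_nonneg ε c _)
        rw [sub_zero] at h
        rw [← h]
        congr 1
        funext ω
        rw [hB.1 ω, sub_zero]
      have hvne : Real.toNNReal (t (i:ℕ)) ≠ 0 := by
        simp [Real.toNNReal_eq_zero, not_le, htpos]
      have := aux_gauss_G2 hvne hRpos
      rw [hE2, ← Measure.map_apply (hB.2.2.1 _) measurableSet_Ioi, hlaw]
      refine this.trans (le_of_eq ?_)
      congr 1
      rw [Real.coe_toNNReal _ htpos.le, hR]
      field_simp
  calc P {ω | ∀ i : Fin n, -c < B (t ((i:ℕ)+1)) ω}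
      ≤ P (E1 ∪ ⋃ i : Fin n, E2 i) := measure_mono hsub
    _ ≤ P E1 + P (⋃ i : Fin n, E2 i) := measure_union_le _ _
    _ ≤ (1/2 + ENNReal.ofReal ε)^n + ∑ i : Fin n, P (E2 i) :=
        add_le_add hE1bound (measure_iUnion_fintype_le _ _)
    _ ≤ (1/2 + ENNReal.ofReal ε)^n + n * ENNReal.ofReal ε := by
        refine add_le_add_right ?_ _
        calc ∑ i : Fin n, P (E2 i) ≤ ∑ _i : Fin n, ENNReal.ofReal ε :=
            Finset.sum_le_sum (fun i _ => hE2bound i)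
          _ = n * ENNReal.ofReal ε := by
            rw [Finset.sum_const, Finset.card_univ, Fintype.card_fin, nsmul_eq_mul]

lemma aux_reach {Ω : Type*} [MeasurableSpace Ω] {P : Measure Ω} [IsProbabilityMeasure P]
    {B : ℝ → Ω → ℝ} (hB : IsStandardBM P B) {c δ : ℝ} (hc : 0 < c) (hδ : 0 < δ) :
    ∃ (n : ℕ) (t : ℕ → ℝ), Monotone t ∧ t 0 = 0 ∧
      P {ω | ∀ i : Fin n, -c < B (t ((i:ℕ)+1)) ω} ≤ ENNReal.ofReal δ := by
  obtain ⟨n, hn⟩ := exists_pow_lt_of_lt_one (show (0:ℝ) < δ/2 by linarith)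
    (show (3/4:ℝ) < 1 by norm_num)
  set ε : ℝ := min (1/4) (δ/(2*(n+1))) with hεdef
  have hε0 : 0 < ε := lt_min (by norm_num) (by positivity)
  refine ⟨n, tseq ε c, tseq_mono ε c, rfl, ?_⟩
  refine (aux_core hB hε0 hc n).trans ?_
  have h1 : (1/2 + ENNReal.ofReal ε)^n ≤ ENNReal.ofReal (δ/2) := by
    have hhalf : (1/2:ENNReal) = ENNReal.ofReal (1/2) := by
      rw [ENNReal.ofReal_div_of_pos (by norm_num)]
      norm_num
    rw [hhalf, ← ENNReal.ofReal_add (by norm_num) hε0.le, ← ENNReal.ofReal_pow (by positivity)]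
    apply ENNReal.ofReal_le_ofReal
    refine le_trans (pow_le_pow_left₀ (by positivity) ?_ n) hn.le
    have : ε ≤ 1/4 := min_le_left _ _
    linarith
  have h2 : (n:ENNReal) * ENNReal.ofReal ε ≤ ENNReal.ofReal (δ/2) := by
    rw [show ((n:ENNReal)) = ENNReal.ofReal (n:ℝ) by simp, ← ENNReal.ofReal_mul (by positivity)]
    apply ENNReal.ofReal_le_ofReal
    have hεle : ε ≤ δ/(2*((n:ℝ)+1)) := min_le_right _ _
    have hstep : (n:ℝ) * ε ≤ (n:ℝ) * (δ/(2*((n:ℝ)+1))) :=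
      mul_le_mul_of_nonneg_left hεle (Nat.cast_nonneg n)
    refine hstep.trans ?_
    have hq : (n:ℝ)/((n:ℝ)+1) ≤ 1 := by
      rw [div_le_one (by positivity)]
      linarith
    calc (n:ℝ) * (δ/(2*((n:ℝ)+1))) = δ * ((n:ℝ)/((n:ℝ)+1)) / 2 := by
          have hne : ((n:ℝ)+1) ≠ 0 := by positivity
          field_simp
      _ ≤ δ/2 := by nlinarith [mul_le_mul_of_nonneg_left hq hδ.le]
  calc (1/2 + ENNReal.ofReal ε)^n + n * ENNReal.ofReal ε
      ≤ ENNReal.ofReal (δ/2) + ENNReal.ofReal (δ/2) := add_le_add h1 h2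
    _ = ENNReal.ofReal δ := by
        rw [← ENNReal.ofReal_add (by positivity) (by positivity)]
        norm_num

lemma lossFn_nonneg {Λ : ℝ → ℝ} (hΛ : IsLossFn Λ) {s : ℝ} (hs : 0 ≤ s) : 0 ≤ Λ s := by
  have h := hΛ.2.2.1 (-1) (by norm_num)
  calc (0:ℝ) = Λ (-1) := h.symm
    _ ≤ Λ s := hΛ.1 (by linarith)

lemma tau_le_of_drop {Ω : Type*} {B : ℝ → Ω → ℝ} {X0 ξ : Ω → ℝ} {α : ℝ} {Λ : ℝ → ℝ} {ω : Ω}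
    (hΛ : IsLossFn Λ) (hα : 0 < α) (hBcont : Continuous fun u => B u ω)
    {s : ℝ} (hs : 0 ≤ s) (hdrop : B s ω ≤ -(X0 ω + ξ ω)) :
    elasticTau B X0 ξ α Λ ω ≤ (s : EReal) := by
  set Y : ℝ → ℝ := fun u => X0 ω + B u ω - α * Λ u with hY
  obtain ⟨u0, hu0mem, hu0min⟩ := isCompact_Icc.exists_isMinOn (Set.nonempty_Icc.2 hs)
    hBcont.continuousOn
  have hbdd : BddBelow (Y '' Set.Icc 0 s) := by
    refine ⟨X0 ω + B u0 ω - α, ?_⟩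
    rintro y ⟨u, hu, rfl⟩
    have h1 : B u0 ω ≤ B u ω := hu0min hu
    have h2 : Λ u ≤ 1 := hΛ.2.2.2 u
    have h3 : α * Λ u ≤ α * 1 := mul_le_mul_of_nonneg_left h2 hα.le
    simp only [hY]
    linarith
  have hmem : Y s ∈ Y '' Set.Icc 0 s := Set.mem_image_of_mem _ ⟨hs, le_rfl⟩
  have hrm : runMin Y s ≤ Y s := csInf_le hbdd hmem
  have hYs : Y s ≤ -(ξ ω) := by
    have h0 : 0 ≤ Λ s := lossFn_nonneg hΛ hs
    have h1 : 0 ≤ α * Λ s := mul_nonneg hα.le h0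
    simp only [hY]
    linarith
  have hL : ξ ω ≤ reflTerm Y s := by
    unfold reflTerm
    refine le_trans ?_ (le_max_right _ _)
    linarith
  exact sInf_le ⟨s, ⟨hs, hL⟩, rfl⟩

lemma tail_bound {Ω : Type*} [MeasurableSpace Ω] {P : Measure Ω} [IsProbabilityMeasure P]
    {Z : Ω → ℝ} (hZ : Measurable Z) {δ : ℝ} (hδ : 0 < δ) :
    ∃ k : ℕ, P {ω | (k:ℝ) < Z ω} ≤ ENNReal.ofReal δ := by
  set A : ℕ → Set Ω := fun k => {ω | (k:ℝ) < Z ω} with hA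
  have hAm : ∀ k, NullMeasurableSet (A k) P :=
    fun k => (measurableSet_lt measurable_const hZ).nullMeasurableSet
  have hanti : Antitone A := by
    intro k m hkm ω hω
    simp only [hA, Set.mem_setOf_eq] at *
    have : (k:ℝ) ≤ m := Nat.cast_le.2 hkm
    linarith
  have hempty : ⋂ k, A k = ∅ := by
    ext ω
    simp only [Set.mem_iInter, Set.mem_empty_iff_false, iff_false, not_forall, hA,
      Set.mem_setOf_eq, not_lt]
    obtain ⟨k, hk⟩ := exists_nat_ge (Z ω)
    exact ⟨k, hk⟩
  have hfin : ∃ k, P (A k) ≠ ⊤ := ⟨0, measure_ne_top _ _⟩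
  have htend : Tendsto (fun k => P (A k)) atTop (nhds (P (⋂ k, A k))) :=
    tendsto_measure_iInter_atTop hAm hanti hfin
  rw [hempty, measure_empty] at htend
  have hpos : (0:ENNReal) < ENNReal.ofReal δ := ENNReal.ofReal_pos.2 hδ
  obtain ⟨k, hk⟩ := (htend.eventually_lt_const hpos).exists
  exact ⟨k, hk.le⟩

end Statement12Aux

/-- every solution `Λ` of the elastic feedback problem satisfies
`Λ_t → 1` as `t → ∞`; equivalently the elastic stopping time `τ` is a.s. finite. -/
theorem statement_12 {Ω : Type*} [MeasurableSpace Ω] (P : Measure Ω) [IsProbabilityMeasure P]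
    (α κ : ℝ) (hα : 0 < α) (hκ : 0 < κ)
    (B : ℝ → Ω → ℝ) (X0 ξ : Ω → ℝ)
    (hB : IsStandardBM P B)
    (hX0meas : Measurable X0) (hX0nonneg : ∀ ω, 0 ≤ X0 ω)
    (hξ : IsExponential P κ ξ)
    (hindepX0ξ : IndepFun X0 ξ P)
    (hindepB : IndepFun (fun ω => (X0 ω, ξ ω)) (fun ω => fun t => B t ω) P)
    (Λ : ℝ → ℝ) (hsol : IsElasticSol P B X0 ξ α Λ) :
    Filter.Tendsto Λ Filter.atTop (nhds 1) ∧
      P {ω | elasticTau B X0 ξ α Λ ω < (⊤ : EReal)} = 1 := by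
  obtain ⟨hΛ, hEq⟩ := hsol
  have key : ∀ δ : ℝ, 0 < δ → ∃ T : ℝ, 0 ≤ T ∧
      P {ω | ¬ elasticTau B X0 ξ α Λ ω ≤ (T : EReal)} ≤ ENNReal.ofReal δ := by
    intro δ hδ
    obtain ⟨k, hk⟩ := tail_bound (P := P) (hX0meas.add hξ.1) (show (0:ℝ) < δ/2 by linarith)
    set c : ℝ := (k:ℝ) + 1 with hc
    have hcpos : 0 < c := by positivity
    obtain ⟨n, t, hmono, ht0, hbound⟩ := aux_reach hB hcpos (show (0:ℝ) < δ/2 by linarith)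
    have htn0 : 0 ≤ t n := ht0 ▸ hmono (Nat.zero_le n)
    refine ⟨t n, htn0, ?_⟩
    have hsub : {ω | ¬ elasticTau B X0 ξ α Λ ω ≤ ((t n : ℝ) : EReal)}
        ⊆ {ω | ∀ i : Fin n, -c < B (t ((i:ℕ)+1)) ω} ∪ {ω | (k:ℝ) < X0 ω + ξ ω} := by
      intro ω hω
      by_contra hcon
      simp only [Set.mem_union, Set.mem_setOf_eq, not_or, not_forall, not_lt] at hcon
      obtain ⟨⟨i, hi⟩, hX⟩ := hcon
      have hdrop : B (t ((i:ℕ)+1)) ω ≤ -(X0 ω + ξ ω) := by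
        rw [hc] at hi
        linarith
      have hs0 : (0:ℝ) ≤ t ((i:ℕ)+1) := ht0 ▸ hmono (Nat.zero_le _)
      have hτ : elasticTau B X0 ξ α Λ ω ≤ ((t ((i:ℕ)+1) : ℝ) : EReal) :=
        tau_le_of_drop hΛ hα (hB.2.1 ω) hs0 hdrop
      have hmon2 : ((t ((i:ℕ)+1) : ℝ) : EReal) ≤ ((t n : ℝ) : EReal) :=
        EReal.coe_le_coe_iff.2 (hmono (Nat.succ_le_of_lt i.2))
      exact hω (hτ.trans hmon2)
    calc P {ω | ¬ elasticTau B X0 ξ α Λ ω ≤ ((t n : ℝ) : EReal)}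
        ≤ P ({ω | ∀ i : Fin n, -c < B (t ((i:ℕ)+1)) ω} ∪ {ω | (k:ℝ) < X0 ω + ξ ω}) :=
          measure_mono hsub
      _ ≤ P {ω | ∀ i : Fin n, -c < B (t ((i:ℕ)+1)) ω} + P {ω | (k:ℝ) < X0 ω + ξ ω} :=
          measure_union_le _ _
      _ ≤ ENNReal.ofReal (δ/2) + ENNReal.ofReal (δ/2) := add_le_add hbound hk
      _ = ENNReal.ofReal δ := by
          rw [← ENNReal.ofReal_add (by positivity) (by positivity)]
          norm_num
  have hsplit : ∀ T : ℝ, (1:ENNReal) ≤ P {ω | elasticTau B X0 ξ α Λ ω ≤ (T:EReal)}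
      + P {ω | ¬ elasticTau B X0 ξ α Λ ω ≤ (T:EReal)} := by
    intro T
    have huniv : (Set.univ : Set Ω) = {ω | elasticTau B X0 ξ α Λ ω ≤ (T:EReal)}
        ∪ {ω | ¬ elasticTau B X0 ξ α Λ ω ≤ (T:EReal)} := by
      ext ω
      simp only [Set.mem_union, Set.mem_setOf_eq, Set.mem_univ, true_iff]
      exact em _
    calc (1:ENNReal) = P Set.univ := measure_univ.symm
      _ = P _ := by rw [huniv]
      _ ≤ _ := measure_union_le _ _
  constructor
  · rw [Metric.tendsto_atTop]
    intro ε hε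
    set δ : ℝ := min (ε/2) (1/2) with hδdef
    have hδ0 : 0 < δ := lt_min (by linarith) (by norm_num)
    have hδhalf : δ ≤ 1/2 := min_le_right _ _
    have hδε : δ ≤ ε/2 := min_le_left _ _
    obtain ⟨T, hT0, hTb⟩ := key δ hδ0
    refine ⟨T, fun t htT => ?_⟩
    have ht0 : 0 ≤ t := hT0.trans htT
    have hsubc : {ω | ¬ elasticTau B X0 ξ α Λ ω ≤ (t:EReal)}
        ⊆ {ω | ¬ elasticTau B X0 ξ α Λ ω ≤ (T:EReal)} := by
      intro ω hω h
      exact hω (h.trans (EReal.coe_le_coe_iff.2 htT))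
    have h2 : P {ω | ¬ elasticTau B X0 ξ α Λ ω ≤ (t:EReal)} ≤ ENNReal.ofReal δ :=
      (measure_mono hsubc).trans hTb
    have h3 : ENNReal.ofReal (1-δ) ≤ P {ω | elasticTau B X0 ξ α Λ ω ≤ (t:EReal)} := by
      have h4 : (1:ENNReal) ≤ P {ω | elasticTau B X0 ξ α Λ ω ≤ (t:EReal)} + ENNReal.ofReal δ :=
        (hsplit t).trans (add_le_add_right h2 _)
      have h5 : (1:ENNReal) - ENNReal.ofReal δ
          ≤ P {ω | elasticTau B X0 ξ α Λ ω ≤ (t:EReal)} := tsub_le_iff_right.2 h4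
      rw [ENNReal.ofReal_sub _ hδ0.le, ENNReal.ofReal_one]
      exact h5
    have hval : Λ t = (P {ω | elasticTau B X0 ξ α Λ ω ≤ (t:EReal)}).toReal := hEq t ht0
    have hle1 : Λ t ≤ 1 := hΛ.2.2.2 t
    have hlow : 1 - δ ≤ Λ t := by
      rw [hval]
      have h6 := ENNReal.toReal_mono (measure_ne_top P _) h3
      rwa [ENNReal.toReal_ofReal (by linarith)] at h6
    rw [Real.dist_eq, abs_of_nonpos (by linarith)]
    linarith
  · refine le_antisymm ((measure_mono (Set.subset_univ _)).trans measure_univ.le) ?_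
    refine ENNReal.le_of_forall_pos_le_add (fun ε hε _ => ?_)
    obtain ⟨T, hT0, hTb⟩ := key ε (by exact_mod_cast hε)
    have h2 : P {ω | elasticTau B X0 ξ α Λ ω ≤ (T:EReal)}
        ≤ P {ω | elasticTau B X0 ξ α Λ ω < (⊤:EReal)} :=
      measure_mono (fun ω hω => lt_of_le_of_lt hω (EReal.coe_lt_top T))
    have h3 : ENNReal.ofReal (ε:ℝ) = (ε:ENNReal) := ENNReal.ofReal_coe_nnreal
    calc (1:ENNReal) ≤ _ + _ := hsplit T
      _ ≤ P {ω | elasticTau B X0 ξ α Λ ω < (⊤:EReal)} + (ε:ENNReal) :=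
          add_le_add h2 (h3 ▸ hTb)

end
end

section
/- Let Λ^κ denote the minimal solution of the elastic feedback problem with parameter κ > 0. Then for every t ≥ 0, Λ^κ_t decreases monotonically to 0 as κ decreases to 0; in particular lim_{κ→0} Λ^κ_t = 0 for all t ≥ 0. -/
open MeasureTheory ProbabilityTheory Filter Topology Set

noncomputable section

namespace S13


lemma runMin_le {Y : ℝ → ℝ} {u s : ℝ} (hb : BddBelow (Y '' Icc 0 u)) (hs : s ∈ Icc 0 u) :
    runMin Y u ≤ Y s := csInf_le hb ⟨s, hs, rfl⟩

lemma le_runMin {Y : ℝ → ℝ} {u c : ℝ} (hu : 0 ≤ u) (h : ∀ s ∈ Icc 0 u, c ≤ Y s) :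
    c ≤ runMin Y u :=
  le_csInf ((nonempty_Icc.mpr hu).image Y) (by rintro y ⟨s, hs, rfl⟩; exact h s hs)

lemma runMin_anti {Y : ℝ → ℝ} {u v : ℝ} (hu : 0 ≤ u) (huv : u ≤ v)
    (hb : BddBelow (Y '' Icc 0 v)) : runMin Y v ≤ runMin Y u :=
  csInf_le_csInf hb ((nonempty_Icc.mpr hu).image Y)
    (image_mono (Icc_subset_Icc_right huv))

lemma runMin_mono_fn {Y Y' : ℝ → ℝ} {u : ℝ} (hu : 0 ≤ u) (hb : BddBelow (Y '' Icc 0 u))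
    (h : ∀ s, Y s ≤ Y' s) : runMin Y u ≤ runMin Y' u :=
  le_csInf ((nonempty_Icc.mpr hu).image Y')
    (by rintro y ⟨s, hs, rfl⟩; exact le_trans (runMin_le hb hs) (h s))

lemma reflTerm_nonneg (Y : ℝ → ℝ) (t : ℝ) : 0 ≤ reflTerm Y t := le_max_left _ _

lemma reflTerm_anti_fn {Y Y' : ℝ → ℝ} {u : ℝ} (hu : 0 ≤ u) (hb : BddBelow (Y '' Icc 0 u))
    (h : ∀ s, Y s ≤ Y' s) : reflTerm Y' u ≤ reflTerm Y u :=
  max_le_max le_rfl (neg_le_neg (runMin_mono_fn hu hb h))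

lemma reflTerm_mono_time {Y : ℝ → ℝ} {u v : ℝ} (hu : 0 ≤ u) (huv : u ≤ v)
    (hb : BddBelow (Y '' Icc 0 v)) : reflTerm Y u ≤ reflTerm Y v :=
  max_le_max le_rfl (neg_le_neg (runMin_anti hu huv hb))

lemma hitTime_le {L : ℝ → ℝ} {x u t : ℝ} (hu : 0 ≤ u) (hx : x ≤ L u) (hut : u ≤ t) :
    hitTime L x ≤ (t : EReal) := by
  have h2 : ((u : ℝ) : EReal) ≤ (t : EReal) := by exact_mod_cast hut
  exact le_trans (sInf_le ⟨u, ⟨hu, hx⟩, rfl⟩) h2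

lemma exists_of_hitTime_le {L : ℝ → ℝ} {x t r : ℝ} (h : hitTime L x ≤ (t : EReal))
    (htr : t < r) : ∃ u, 0 ≤ u ∧ x ≤ L u ∧ u < r := by
  have h2 : hitTime L x < (r : EReal) := lt_of_le_of_lt h (by exact_mod_cast htr)
  obtain ⟨a, ⟨u, hu, rfl⟩, hlt⟩ := sInf_lt_iff.mp h2
  have hlt2 : ((u : ℝ) : EReal) < (r : EReal) := hlt
  exact ⟨u, hu.1, hu.2, by exact_mod_cast hlt2⟩

lemma hitTime_neg {L : ℝ → ℝ} {x t : ℝ} (ht : t < 0) : ¬ hitTime L x ≤ (t : EReal) := by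
  intro h
  obtain ⟨u, hu0, -, hu⟩ := exists_of_hitTime_le h ht
  exact absurd (lt_of_le_of_lt hu0 hu) (lt_irrefl _)

lemma ereal_le_coe_of_forall {a : EReal} {c : ℝ}
    (h : ∀ n : ℕ, a ≤ ((c + 1 / (n + 1) : ℝ) : EReal)) : a ≤ (c : EReal) := by
  have htd : Tendsto (fun n : ℕ => ((c + 1 / (n + 1) : ℝ) : EReal)) atTop (𝓝 (c : EReal)) :=
    EReal.tendsto_coe.mpr
      (by simpa using tendsto_const_nhds.add (tendsto_one_div_add_atTop_nhds_zero_nat (𝕜 := ℝ)))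
  exact ge_of_tendsto htd (Eventually.of_forall h)

lemma bddBelow_Y {g : ℝ → ℝ} (hg : Continuous g) {α : ℝ} (hα : 0 ≤ α) {Λ : ℝ → ℝ}
    (hΛ0 : ∀ s, 0 ≤ Λ s) (hΛ1 : ∀ s, Λ s ≤ 1) (u : ℝ) :
    BddBelow ((fun s => g s - α * Λ s) '' Icc 0 u) := by
  obtain ⟨c, hc⟩ := (isCompact_Icc.image hg).bddBelow
  refine ⟨c - α, ?_⟩
  rintro y ⟨s, hs, rfl⟩
  have h1 : c ≤ g s := hc (mem_image_of_mem g hs)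
  show c - α ≤ g s - α * Λ s
  nlinarith [hΛ1 s, hΛ0 s]

lemma tau_anti {g : ℝ → ℝ} (hg : Continuous g) {α : ℝ} (hα : 0 ≤ α) {Λ Λ' : ℝ → ℝ}
    (hΛ'0 : ∀ s, 0 ≤ Λ' s) (hΛ'1 : ∀ s, Λ' s ≤ 1) (h : ∀ s, Λ s ≤ Λ' s) (x : ℝ) :
    hitTime (reflTerm fun s => g s - α * Λ' s) x ≤
      hitTime (reflTerm fun s => g s - α * Λ s) x := by
  apply sInf_le_sInf
  apply image_mono
  rintro u ⟨hu0, hu⟩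
  refine ⟨hu0, le_trans hu ?_⟩
  exact reflTerm_anti_fn hu0 (bddBelow_Y hg hα hΛ'0 hΛ'1 u)
    (fun s => by have := h s; nlinarith)

lemma runMin_rc {g : ℝ → ℝ} (hg : Continuous g) {α : ℝ} (hα : 0 ≤ α) {Λ : ℝ → ℝ}
    (hrc : ∀ u, ContinuousWithinAt Λ (Ici u) u)
    (hΛ0 : ∀ s, 0 ≤ Λ s) (hΛ1 : ∀ s, Λ s ≤ 1) {t : ℝ} (ht : 0 ≤ t) {ε : ℝ} (hε : 0 < ε) :
    ∃ δ > 0, ∀ v ∈ Icc t (t + δ),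
      runMin (fun s => g s - α * Λ s) t - ε ≤ runMin (fun s => g s - α * Λ s) v := by
  set Y : ℝ → ℝ := fun s => g s - α * Λ s with hY
  have hYrc : ContinuousWithinAt Y (Ici t) t :=
    (hg.continuousWithinAt).sub (continuousWithinAt_const.mul (hrc t))
  obtain ⟨δ, hδ0, hδ⟩ := Metric.continuousWithinAt_iff.mp hYrc ε hε
  have hbb : BddBelow (Y '' Icc 0 t) := bddBelow_Y hg hα hΛ0 hΛ1 t
  refine ⟨δ / 2, by linarith, fun v hv => ?_⟩
  refine le_runMin (le_trans ht hv.1) fun s hs => ?_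
  rcases le_or_gt s t with hst | hst
  · have := runMin_le hbb ⟨hs.1, hst⟩
    linarith
  · have hsI : s ∈ Ici t := le_of_lt hst
    have hds : dist s t < δ := by
      rw [Real.dist_eq, abs_of_nonneg (by linarith)]
      have := hs.2
      have := hv.2
      linarith
    have h1 : |Y s - Y t| < ε := by
      have := hδ hsI hds
      rwa [Real.dist_eq] at this
    have h2 : runMin Y t ≤ Y t := runMin_le hbb ⟨ht, le_rfl⟩
    have := abs_lt.mp h1
    linarith [this.1]

lemma tau_le_iff {g : ℝ → ℝ} (hg : Continuous g) {α : ℝ} (hα : 0 ≤ α) {Λ : ℝ → ℝ}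
    (hrc : ∀ u, ContinuousWithinAt Λ (Ici u) u)
    (hΛ0 : ∀ s, 0 ≤ Λ s) (hΛ1 : ∀ s, Λ s ≤ 1) {t x : ℝ} (ht : 0 ≤ t) :
    hitTime (reflTerm fun s => g s - α * Λ s) x ≤ (t : EReal) ↔
      x ≤ reflTerm (fun s => g s - α * Λ s) t := by
  set Y : ℝ → ℝ := fun s => g s - α * Λ s with hY
  constructor
  · intro h
    refine le_of_forall_pos_le_add fun ε hε => ?_
    obtain ⟨δ, hδ0, hδ⟩ := runMin_rc hg hα hrc hΛ0 hΛ1 ht hε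
    obtain ⟨u, hu0, hxu, hur⟩ := exists_of_hitTime_le h (by linarith : t < t + δ)
    rcases le_or_gt u t with hut | hut
    · have : reflTerm Y u ≤ reflTerm Y t :=
        reflTerm_mono_time hu0 hut (bddBelow_Y hg hα hΛ0 hΛ1 t)
      linarith
    · have hrm : runMin Y t - ε ≤ runMin Y u := hδ u ⟨le_of_lt hut, le_of_lt hur⟩
      have : reflTerm Y u ≤ reflTerm Y t + ε := by
        refine max_le ?_ ?_
        · have := le_max_left (0:ℝ) (-(runMin Y t)); linarith [reflTerm_nonneg Y t]
        · have := le_max_right (0:ℝ) (-(runMin Y t))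
          simp only [reflTerm]
          linarith
      linarith
  · intro h
    exact hitTime_le ht h le_rfl



-- assume from det.lean:
/-- measurability of the running minimum for monotone `Λ`. -/
lemma meas_runMin {Ω : Type*} [MeasurableSpace Ω] {α : ℝ} (hα : 0 ≤ α)
    {B : ℝ → Ω → ℝ} {X0 : Ω → ℝ}
    (hX0meas : Measurable X0) (hBmeas : ∀ s, Measurable (B s))
    (hBcont : ∀ ω, Continuous fun s => B s ω)
    {Λ : ℝ → ℝ} (hmono : Monotone Λ) (hΛ0 : ∀ s, 0 ≤ Λ s) (hΛ1 : ∀ s, Λ s ≤ 1)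
    {u : ℝ} (hu : 0 ≤ u) :
    Measurable fun ω => runMin (fun s => X0 ω + B s ω - α * Λ s) u := by
  apply measurable_of_Iio
  intro r
  have hset : (fun ω => runMin (fun s => X0 ω + B s ω - α * Λ s) u) ⁻¹' Iio r =
      {ω | X0 ω + B u ω - α * Λ u < r} ∪
        ⋃ q : ℚ, {ω | (q : ℝ) ∈ Icc (0:ℝ) u ∧ X0 ω + B (q:ℝ) ω - α * Λ (q:ℝ) < r} := by
    ext ω
    set Y : ℝ → ℝ := fun s => X0 ω + B s ω - α * Λ s with hY
    have hg : Continuous fun s => X0 ω + B s ω := continuous_const.add (hBcont ω)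
    have hbb : BddBelow (Y '' Icc 0 u) := bddBelow_Y hg hα hΛ0 hΛ1 u
    simp only [mem_preimage, mem_Iio, mem_union, mem_iUnion, mem_setOf_eq]
    constructor
    · intro h
      obtain ⟨y, ⟨v, hv, rfl⟩, hy⟩ :=
        (csInf_lt_iff hbb ((nonempty_Icc.mpr hu).image Y)).mp h
      rcases eq_or_lt_of_le hv.2 with rfl | hvu
      · exact Or.inl hy
      · -- pick a rational slightly to the right of v
        have hYv : X0 ω + B v ω - α * Λ v < r := hy
        have hgc : ContinuousAt (fun s => X0 ω + B s ω) v := hg.continuousAt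
        have hε : (0:ℝ) < r - (X0 ω + B v ω - α * Λ v) := by linarith
        obtain ⟨δ, hδ0, hδ⟩ := Metric.continuousAt_iff.mp hgc _ hε
        obtain ⟨q, hq1, hq2⟩ := exists_rat_btwn (lt_min hvu (by linarith : v < v + δ))
        have hqu : (q:ℝ) ≤ u := le_of_lt (lt_of_lt_of_le hq2 (min_le_left _ _))
        have hqd : dist (q:ℝ) v < δ := by
          rw [Real.dist_eq, abs_of_nonneg (by linarith)]
          have := lt_of_lt_of_le hq2 (min_le_right _ _); linarith
        have hgq := hδ hqd
        rw [Real.dist_eq] at hgq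
        have h1 : X0 ω + B (q:ℝ) ω < X0 ω + B v ω + (r - (X0 ω + B v ω - α * Λ v)) := by
          have := (abs_lt.mp hgq).2; linarith
        have h2 : α * Λ v ≤ α * Λ (q:ℝ) :=
          mul_le_mul_of_nonneg_left (hmono (le_of_lt hq1)) hα
        exact Or.inr ⟨q, ⟨le_trans hv.1 (le_of_lt hq1), hqu⟩, by linarith⟩
    · rintro (h | ⟨q, hq, h⟩)
      · exact lt_of_le_of_lt (runMin_le hbb ⟨hu, le_rfl⟩) h
      · exact lt_of_le_of_lt (runMin_le hbb hq) h
  rw [hset]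
  have hmeasY : ∀ s : ℝ, MeasurableSet {ω | X0 ω + B s ω - α * Λ s < r} := fun s =>
    measurableSet_lt (((hX0meas.add (hBmeas s))).sub measurable_const) measurable_const
  refine (hmeasY u).union (MeasurableSet.iUnion fun q => ?_)
  by_cases hq : (q:ℝ) ∈ Icc (0:ℝ) u
  · simp only [hq, true_and]; exact hmeasY _
  · simp only [hq, false_and, setOf_false]; exact MeasurableSet.empty


/-- auxiliary functional on initial value and path, used for the independence argument. -/
def psi (α T : ℝ) (Λ : ℝ → ℝ) : ℝ × (ℝ → ℝ) → EReal := fun p =>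
  min ((p.1 + p.2 T - α * Λ T : ℝ) : EReal)
    (⨅ q : ℚ, if (q : ℝ) ∈ Icc (0:ℝ) T then ((p.1 + p.2 (q:ℝ) - α * Λ (q:ℝ) : ℝ) : EReal) else ⊤)

lemma psi_meas (α T : ℝ) (Λ : ℝ → ℝ) : Measurable (psi α T Λ) := by
  have hco : ∀ s : ℝ, Measurable fun p : ℝ × (ℝ → ℝ) => ((p.1 + p.2 s - α * Λ s : ℝ) : EReal) := by
    intro s
    apply measurable_coe_real_ereal.comp
    apply Measurable.sub ?_ measurable_const
    exact measurable_fst.add ((measurable_pi_apply s).comp measurable_snd)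
  apply Measurable.min (hco T)
  refine Measurable.iInf fun q => ?_
  by_cases hq : (q : ℝ) ∈ Icc (0:ℝ) T
  · simp only [hq, if_true]; exact hco (q:ℝ)
  · simp only [hq, if_false]; exact measurable_const

lemma psi_eq {α : ℝ} (hα : 0 ≤ α) {Λ : ℝ → ℝ} (hmono : Monotone Λ)
    (hΛ0 : ∀ s, 0 ≤ Λ s) (hΛ1 : ∀ s, Λ s ≤ 1) {T : ℝ} (hT : 0 ≤ T)
    (x : ℝ) {b : ℝ → ℝ} (hb : Continuous b) :
    psi α T Λ (x, b) = ((runMin (fun s => x + b s - α * Λ s) T : ℝ) : EReal) := by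
  set Y : ℝ → ℝ := fun s => x + b s - α * Λ s with hYdef
  have hg : Continuous fun s => x + b s := continuous_const.add hb
  have hbb : BddBelow (Y '' Icc 0 T) := bddBelow_Y hg hα hΛ0 hΛ1 T
  have hH : ∀ v ∈ Icc (0:ℝ) T, psi α T Λ (x, b) ≤ ((Y v : ℝ) : EReal) := by
    intro v hv
    rcases eq_or_lt_of_le hv.2 with rfl | hvT
    · exact min_le_left _ _
    · have key : ∀ ε : ℝ, 0 < ε → psi α T Λ (x, b) ≤ ((Y v + ε : ℝ) : EReal) := by
        intro ε hε
        obtain ⟨δ, hδ0, hδ⟩ := Metric.continuousAt_iff.mp hg.continuousAt ε hε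
        obtain ⟨q, hq1, hq2⟩ := exists_rat_btwn (lt_min hvT (by linarith : v < v + δ))
        have hqIcc : (q : ℝ) ∈ Icc (0:ℝ) T :=
          ⟨le_trans hv.1 (le_of_lt hq1), le_of_lt (lt_of_lt_of_le hq2 (min_le_left _ _))⟩
        have hqd : dist (q:ℝ) v < δ := by
          rw [Real.dist_eq, abs_of_nonneg (by linarith)]
          have := lt_of_lt_of_le hq2 (min_le_right _ _); linarith
        have hgq := hδ hqd
        rw [Real.dist_eq] at hgq
        have h1 : x + b (q:ℝ) < x + b v + ε := by have := (abs_lt.mp hgq).2; linarith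
        have h2 : α * Λ v ≤ α * Λ (q:ℝ) :=
          mul_le_mul_of_nonneg_left (hmono (le_of_lt hq1)) hα
        have hle : psi α T Λ (x, b) ≤ ((x + b (q:ℝ) - α * Λ (q:ℝ) : ℝ) : EReal) := by
          refine le_trans (min_le_right _ _) (le_trans (iInf_le _ q) ?_)
          rw [if_pos hqIcc]
        refine le_trans hle ?_
        exact EReal.coe_le_coe_iff.mpr (by simp only [hYdef]; linarith)
      refine ereal_le_coe_of_forall fun n => ?_
      exact key (1 / (n + 1)) (by positivity)
  refine le_antisymm ?_ ?_
  · by_contra hcon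
    push_neg at hcon
    obtain ⟨z, hz1, hz2⟩ := EReal.lt_iff_exists_real_btwn.mp hcon
    have hz1' : runMin Y T < z := EReal.coe_lt_coe_iff.mp hz1
    obtain ⟨y, ⟨v, hv, rfl⟩, hy⟩ :=
      (csInf_lt_iff hbb ((nonempty_Icc.mpr hT).image Y)).mp hz1'
    exact absurd (lt_of_le_of_lt (le_trans (hH v hv) (EReal.coe_le_coe_iff.mpr (le_of_lt hy)))
      hz2) (lt_irrefl _)
  · refine le_min (EReal.coe_le_coe_iff.mpr (runMin_le hbb ⟨hT, le_rfl⟩)) ?_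
    refine le_iInf fun q => ?_
    by_cases hq : (q : ℝ) ∈ Icc (0:ℝ) T
    · rw [if_pos hq]; exact EReal.coe_le_coe_iff.mpr (runMin_le hbb hq)
    · rw [if_neg hq]; exact le_top

/-- the map distribution of an exponential variable on `Iic d`. -/
lemma exp_Iic {Ω : Type*} [MeasurableSpace Ω] {P : Measure Ω} [IsProbabilityMeasure P]
    {κ : ℝ} {ξ : Ω → ℝ} (hξ : IsExponential P κ ξ) {d : ℝ} (hd : 0 ≤ d) :
    Measure.map ξ P (Iic d) = 1 - ENNReal.ofReal (Real.exp (-κ * d)) := by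
  rw [Measure.map_apply hξ.1 measurableSet_Iic]
  have h1 : ξ ⁻¹' Iic d = {ω | d < ξ ω}ᶜ := by ext ω; simp [not_lt]
  have h2 : MeasurableSet {ω | d < ξ ω} := measurableSet_lt measurable_const hξ.1
  rw [h1, measure_compl h2 (measure_ne_top _ _), hξ.2 d hd, measure_univ]

lemma exp_set_mono {Ω : Type*} [MeasurableSpace Ω] {P : Measure Ω} [IsProbabilityMeasure P]
    {κ₁ κ₂ : ℝ} (hκ₁ : 0 < κ₁) (hle : κ₁ ≤ κ₂) {ξ₁ ξ₂ : Ω → ℝ}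
    (hξ₁ : IsExponential P κ₁ ξ₁) (hξ₂ : IsExponential P κ₂ ξ₂) (c : EReal) :
    Measure.map ξ₁ P {r : ℝ | r ≤ 0 ∨ c ≤ ((-r : ℝ) : EReal)}
      ≤ Measure.map ξ₂ P {r : ℝ | r ≤ 0 ∨ c ≤ ((-r : ℝ) : EReal)} := by
  haveI h1 : IsProbabilityMeasure (Measure.map ξ₁ P) :=
    Measure.isProbabilityMeasure_map hξ₁.1.aemeasurable
  haveI h2 : IsProbabilityMeasure (Measure.map ξ₂ P) :=
    Measure.isProbabilityMeasure_map hξ₂.1.aemeasurable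
  induction c using EReal.rec with
  | bot =>
    have hset : {r : ℝ | r ≤ 0 ∨ (⊥ : EReal) ≤ ((-r : ℝ) : EReal)} = univ :=
      eq_univ_of_forall fun r => Or.inr bot_le
    rw [hset]; simp [measure_univ]
  | coe c' =>
    have hset : {r : ℝ | r ≤ 0 ∨ ((c' : ℝ) : EReal) ≤ ((-r : ℝ) : EReal)} =
        Iic (max 0 (-c')) := by
      ext r
      simp only [mem_setOf_eq, mem_Iic, EReal.coe_le_coe_iff, le_max_iff]
      constructor
      · rintro (h | h); · exact Or.inl h
        · exact Or.inr (by linarith)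
      · rintro (h | h); · exact Or.inl h
        · exact Or.inr (by linarith)
    have hd : (0:ℝ) ≤ max 0 (-c') := le_max_left _ _
    rw [hset, exp_Iic hξ₁ hd, exp_Iic hξ₂ hd]
    refine tsub_le_tsub_left (ENNReal.ofReal_le_ofReal (Real.exp_le_exp.mpr ?_)) 1
    nlinarith [hd]
  | top =>
    have hset : {r : ℝ | r ≤ 0 ∨ (⊤ : EReal) ≤ ((-r : ℝ) : EReal)} = Iic 0 := by
      ext r
      simp only [mem_setOf_eq, mem_Iic, top_le_iff]
      constructor
      · rintro (h | h); · exact h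
        · exact absurd h (by simp [EReal.coe_ne_top])
      · exact Or.inl
    rw [hset, exp_Iic hξ₁ le_rfl, exp_Iic hξ₂ le_rfl]
    simp


lemma measure_xi_le_mono {Ω : Type*} [MeasurableSpace Ω] (P : Measure Ω)
    [IsProbabilityMeasure P]
    {α : ℝ} (hα : 0 ≤ α) {B : ℝ → Ω → ℝ} {X0 : Ω → ℝ} {ξ₁ ξ₂ : Ω → ℝ} {κ₁ κ₂ : ℝ}
    (hκ₁ : 0 < κ₁) (hle : κ₁ ≤ κ₂)
    (hBmeas : ∀ s, Measurable (B s)) (hBcont : ∀ ω, Continuous fun s => B s ω)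
    (hX0meas : Measurable X0)
    (hξ₁ : IsExponential P κ₁ ξ₁) (hξ₂ : IsExponential P κ₂ ξ₂)
    (hi1₁ : IndepFun X0 ξ₁ P) (hi1₂ : IndepFun X0 ξ₂ P)
    (hi2₁ : IndepFun (fun ω => (X0 ω, ξ₁ ω)) (fun ω => fun s => B s ω) P)
    (hi2₂ : IndepFun (fun ω => (X0 ω, ξ₂ ω)) (fun ω => fun s => B s ω) P)
    {Λ : ℝ → ℝ} (hmono : Monotone Λ) (hΛ0 : ∀ s, 0 ≤ Λ s) (hΛ1 : ∀ s, Λ s ≤ 1)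
    {T : ℝ} (hT : 0 ≤ T) :
    P {ω | ξ₁ ω ≤ reflTerm (fun s => X0 ω + B s ω - α * Λ s) T}
      ≤ P {ω | ξ₂ ω ≤ reflTerm (fun s => X0 ω + B s ω - α * Λ s) T} := by
  set Z : Ω → (ℝ → ℝ) := fun ω s => B s ω with hZdef
  have hZmeas : Measurable Z := measurable_pi_lambda _ fun s => hBmeas s
  set E : Set ((ℝ × ℝ) × (ℝ → ℝ)) :=
    {p | p.1.2 ≤ 0 ∨ psi α T Λ (p.1.1, p.2) ≤ ((-p.1.2 : ℝ) : EReal)} with hEdef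
  have hEmeas : MeasurableSet E := by
    have e1 : MeasurableSet {p : (ℝ × ℝ) × (ℝ → ℝ) | p.1.2 ≤ 0} :=
      measurableSet_le (measurable_fst.snd) measurable_const
    have e2 : MeasurableSet {p : (ℝ × ℝ) × (ℝ → ℝ) |
        psi α T Λ (p.1.1, p.2) ≤ ((-p.1.2 : ℝ) : EReal)} := by
      apply measurableSet_le
      · exact (psi_meas α T Λ).comp ((measurable_fst.fst).prodMk measurable_snd)
      · exact measurable_coe_real_ereal.comp (measurable_fst.snd).neg
    have : E = {p : (ℝ × ℝ) × (ℝ → ℝ) | p.1.2 ≤ 0} ∪ {p : (ℝ × ℝ) × (ℝ → ℝ) |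
        psi α T Λ (p.1.1, p.2) ≤ ((-p.1.2 : ℝ) : EReal)} := by
      ext p; simp [hEdef, mem_union]
    rw [this]; exact e1.union e2
  have hrewrite : ∀ ξ' : Ω → ℝ,
      {ω | ξ' ω ≤ reflTerm (fun s => X0 ω + B s ω - α * Λ s) T}
        = (fun ω => ((X0 ω, ξ' ω), Z ω)) ⁻¹' E := by
    intro ξ'
    ext ω
    simp only [mem_setOf_eq, mem_preimage, hEdef]
    rw [psi_eq hα hmono hΛ0 hΛ1 hT (X0 ω) (hBcont ω)]
    show ξ' ω ≤ max 0 (-(runMin _ T)) ↔ _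
    rw [le_max_iff]
    constructor
    · rintro (h | h)
      · exact Or.inl h
      · exact Or.inr (EReal.coe_le_coe_iff.mpr (by linarith))
    · rintro (h | h)
      · exact Or.inl h
      · have := EReal.coe_le_coe_iff.mp h
        exact Or.inr (by linarith)
  have hcalc : ∀ ξ' : Ω → ℝ, Measurable ξ' → IndepFun X0 ξ' P →
      IndepFun (fun ω => (X0 ω, ξ' ω)) Z P →
      P ((fun ω => ((X0 ω, ξ' ω), Z ω)) ⁻¹' E)
        = ∫⁻ b, ∫⁻ x, Measure.map ξ' P
            {r : ℝ | r ≤ 0 ∨ psi α T Λ (x, b) ≤ ((-r : ℝ) : EReal)}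
            ∂(Measure.map X0 P) ∂(Measure.map Z P) := by
    intro ξ' hξm hi1 hi2
    haveI : IsProbabilityMeasure (Measure.map ξ' P) :=
      Measure.isProbabilityMeasure_map hξm.aemeasurable
    haveI : IsProbabilityMeasure (Measure.map X0 P) :=
      Measure.isProbabilityMeasure_map hX0meas.aemeasurable
    haveI : IsProbabilityMeasure (Measure.map Z P) :=
      Measure.isProbabilityMeasure_map hZmeas.aemeasurable
    have hWm : Measurable fun ω => (X0 ω, ξ' ω) := hX0meas.prodMk hξm
    have hmap2 := (indepFun_iff_map_prod_eq_prod_map_map hWm.aemeasurable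
      hZmeas.aemeasurable).mp hi2
    have hmap1 := (indepFun_iff_map_prod_eq_prod_map_map hX0meas.aemeasurable
      hξm.aemeasurable).mp hi1
    rw [← Measure.map_apply (hWm.prodMk hZmeas) hEmeas, hmap2, hmap1,
      Measure.prod_apply_symm hEmeas]
    refine lintegral_congr fun b => ?_
    have hsb : MeasurableSet ((fun w : ℝ × ℝ => (w, b)) ⁻¹' E) :=
      (measurable_id.prodMk measurable_const) hEmeas
    rw [Measure.prod_apply hsb]
    refine lintegral_congr fun x => ?_
    congr 1
  calc P {ω | ξ₁ ω ≤ reflTerm (fun s => X0 ω + B s ω - α * Λ s) T}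
      = ∫⁻ b, ∫⁻ x, Measure.map ξ₁ P
          {r : ℝ | r ≤ 0 ∨ psi α T Λ (x, b) ≤ ((-r : ℝ) : EReal)}
          ∂(Measure.map X0 P) ∂(Measure.map Z P) := by
        rw [hrewrite ξ₁, hcalc ξ₁ hξ₁.1 hi1₁ hi2₁]
    _ ≤ ∫⁻ b, ∫⁻ x, Measure.map ξ₂ P
          {r : ℝ | r ≤ 0 ∨ psi α T Λ (x, b) ≤ ((-r : ℝ) : EReal)}
          ∂(Measure.map X0 P) ∂(Measure.map Z P) := by
        refine lintegral_mono fun b => lintegral_mono fun x => ?_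
        exact exp_set_mono hκ₁ hle hξ₁ hξ₂ _
    _ = P {ω | ξ₂ ω ≤ reflTerm (fun s => X0 ω + B s ω - α * Λ s) T} := by
        rw [hrewrite ξ₂, hcalc ξ₂ hξ₂.1 hi1₂ hi2₂]


section Gamma
variable {Ω : Type*} [MeasurableSpace Ω] (P : Measure Ω) [IsProbabilityMeasure P]
  {α : ℝ} {B : ℝ → Ω → ℝ} {X0 : Ω → ℝ} {ξ' : Ω → ℝ} {Λ : ℝ → ℝ}

lemma Gamma_monoTime :
    Monotone fun u : ℝ =>
      (P {ω | hitTime (reflTerm fun s => X0 ω + B s ω - α * Λ s) (ξ' ω) ≤ (u : EReal)}).toReal := by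
  intro a b hab
  refine ENNReal.toReal_mono (measure_ne_top _ _) (measure_mono fun ω h => ?_)
  exact le_trans h (EReal.coe_le_coe_iff.mpr hab)

lemma Gamma_nonneg_zero {t : ℝ} (ht : t < 0) :
    (P {ω | hitTime (reflTerm fun s => X0 ω + B s ω - α * Λ s) (ξ' ω) ≤ (t : EReal)}).toReal
      = 0 := by
  have : {ω | hitTime (reflTerm fun s => X0 ω + B s ω - α * Λ s) (ξ' ω) ≤ (t : EReal)} = ∅ :=
    eq_empty_of_forall_notMem fun ω h => hitTime_neg ht h
  rw [this, measure_empty]; rfl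

lemma tauSet_iInter (hα : 0 ≤ α) (hBcont : ∀ ω, Continuous fun s => B s ω)
    (hmono : Monotone Λ) (hΛ0 : ∀ s, 0 ≤ Λ s) (hΛ1 : ∀ s, Λ s ≤ 1) {t : ℝ} (ht : 0 ≤ t) :
    {ω | hitTime (reflTerm fun s => X0 ω + B s ω - α * Λ s) (ξ' ω) ≤ (t : EReal)}
      = ⋂ n : ℕ, {ω | ξ' ω ≤ reflTerm (fun s => X0 ω + B s ω - α * Λ s) (t + 1 / (n + 1))} := by
  ext ω
  have hg : Continuous fun s => X0 ω + B s ω := continuous_const.add (hBcont ω)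
  simp only [mem_setOf_eq, mem_iInter]
  constructor
  · intro h n
    have hpos : (0:ℝ) < 1 / (n + 1) := by positivity
    obtain ⟨u, hu0, hxu, hur⟩ := exists_of_hitTime_le h (by linarith : t < t + 1 / (n + 1))
    exact le_trans hxu (reflTerm_mono_time hu0 (le_of_lt hur)
      (bddBelow_Y hg hα hΛ0 hΛ1 _))
  · intro h
    refine ereal_le_coe_of_forall fun n => ?_
    have hpos : (0:ℝ) < 1 / (n + 1) := by positivity
    exact hitTime_le (by linarith) (h n) le_rfl

lemma Gamma_rc (hα : 0 ≤ α) (hX0meas : Measurable X0) (hBmeas : ∀ s, Measurable (B s))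
    (hBcont : ∀ ω, Continuous fun s => B s ω) (hξm : Measurable ξ')
    (hmono : Monotone Λ) (hΛ0 : ∀ s, 0 ≤ Λ s) (hΛ1 : ∀ s, Λ s ≤ 1) (t : ℝ) :
    ContinuousWithinAt
      (fun u : ℝ =>
        (P {ω | hitTime (reflTerm fun s => X0 ω + B s ω - α * Λ s) (ξ' ω) ≤ (u : EReal)}).toReal)
      (Ici t) t := by
  set f : ℝ → ℝ := fun u =>
    (P {ω | hitTime (reflTerm fun s => X0 ω + B s ω - α * Λ s) (ξ' ω) ≤ (u : EReal)}).toReal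
    with hfdef
  have hfmono : Monotone f := Gamma_monoTime P
  rcases lt_or_ge t 0 with ht | ht
  · rw [Metric.continuousWithinAt_iff]
    intro ε hε
    refine ⟨-t, by linarith, fun u hu hd => ?_⟩
    have hu0 : u < 0 := by
      rw [Real.dist_eq, abs_of_nonneg (by exact sub_nonneg.mpr hu)] at hd
      linarith
    have h1 : f u = 0 := Gamma_nonneg_zero P hu0
    have h2 : f t = 0 := Gamma_nonneg_zero P ht
    show dist (f u) (f t) < ε
    rw [h1, h2]
    simpa using hε
  · rw [Metric.continuousWithinAt_iff]
    intro ε hε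
    set A : ℕ → Set Ω := fun n =>
      {ω | ξ' ω ≤ reflTerm (fun s => X0 ω + B s ω - α * Λ s) (t + 1 / (n + 1))} with hAdef
    have hAmeas : ∀ n, MeasurableSet (A n) := by
      intro n
      have hpos : (0:ℝ) ≤ t + 1 / (n + 1) := by positivity
      exact measurableSet_le hξm
        (measurable_const.max
          (meas_runMin hα hX0meas hBmeas hBcont hmono hΛ0 hΛ1 hpos).neg)
    have hAanti : Antitone A := by
      intro n m hnm ω hω
      have h1 : (0:ℝ) < 1 / (m + 1) := by positivity
      have h2 : (1:ℝ) / (m + 1) ≤ 1 / (n + 1) := by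
        apply one_div_le_one_div_of_le (by positivity)
        exact_mod_cast by exact_mod_cast Nat.add_le_add_right hnm 1
      exact le_trans hω (reflTerm_mono_time (by linarith) (by linarith)
        (bddBelow_Y (continuous_const.add (hBcont ω)) hα hΛ0 hΛ1 _))
    have hIA : ⋂ n, A n =
        {ω | hitTime (reflTerm fun s => X0 ω + B s ω - α * Λ s) (ξ' ω) ≤ (t : EReal)} :=
      (tauSet_iInter hα hBcont hmono hΛ0 hΛ1 ht).symm
    have htd : Tendsto (fun n => P (A n)) atTop
        (𝓝 (P {ω | hitTime (reflTerm fun s => X0 ω + B s ω - α * Λ s) (ξ' ω) ≤ (t : EReal)})) := by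
      have := tendsto_measure_iInter_atTop (μ := P) (s := A)
        (fun n => (hAmeas n).nullMeasurableSet) hAanti ⟨0, measure_ne_top _ _⟩
      rwa [hIA] at this
    have htd2 : Tendsto (fun n => (P (A n)).toReal) atTop (𝓝 (f t)) :=
      (ENNReal.tendsto_toReal (measure_ne_top _ _)).comp htd
    have hev : ∀ᶠ n in atTop, (P (A n)).toReal < f t + ε / 2 :=
      htd2.eventually_lt_const (by linarith)
    obtain ⟨n, hn⟩ := hev.exists
    have hδpos : (0:ℝ) < 1 / (n + 1) := by positivity
    refine ⟨1 / (n + 1) / 2, by positivity, fun u hu hd => ?_⟩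
    have hut : u - t < 1 / (n + 1) := by
      rw [Real.dist_eq, abs_of_nonneg (sub_nonneg.mpr hu)] at hd
      linarith
    have hfu : f u ≤ (P (A n)).toReal := by
      refine ENNReal.toReal_mono (measure_ne_top _ _) (measure_mono fun ω h => ?_)
      obtain ⟨v, hv0, hxv, hvr⟩ := exists_of_hitTime_le h (by linarith : u < t + 1 / (n + 1))
      exact le_trans hxv (reflTerm_mono_time hv0 (le_of_lt hvr)
        (bddBelow_Y (continuous_const.add (hBcont ω)) hα hΛ0 hΛ1 _))
    have hftu : f t ≤ f u := hfmono hu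
    rw [Real.dist_eq, abs_of_nonneg (by linarith)]
    linarith
end Gamma

end S13

namespace S13

lemma lossFn_nonneg' {Λ : ℝ → ℝ} (hmono : Monotone Λ) (hneg : ∀ t : ℝ, t < 0 → Λ t = 0)
    (s : ℝ) : 0 ≤ Λ s := by
  rcases lt_or_ge s 0 with h | h
  · rw [hneg s h]
  · have := hmono (show (-1:ℝ) ≤ s by linarith)
    rw [hneg (-1) (by norm_num)] at this
    exact this

end S13

/-- for every `t ≥ 0`, the minimal solution `Λ^κ_t` of the elastic feedback
problem decreases monotonically to `0` as `κ` decreases to `0`. -/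
theorem statement_13 {Ω : Type*} [MeasurableSpace Ω] (P : Measure Ω) [IsProbabilityMeasure P]
    (α : ℝ) (hα : 0 < α)
    (B : ℝ → Ω → ℝ) (X0 : Ω → ℝ) (ξ : ℝ → Ω → ℝ)
    (hB : IsStandardBM P B)
    (hX0meas : Measurable X0) (hX0nonneg : ∀ ω, 0 ≤ X0 ω)
    (hξ : ∀ κ : ℝ, 0 < κ → IsExponential P κ (ξ κ))
    (hindepX0ξ : ∀ κ : ℝ, 0 < κ → IndepFun X0 (ξ κ) P)
    (hindepB : ∀ κ : ℝ, 0 < κ → IndepFun (fun ω => (X0 ω, ξ κ ω)) (fun ω => fun t => B t ω) P)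
    (Λ : ℝ → ℝ → ℝ)
    (hmin : ∀ κ : ℝ, 0 < κ → IsMinimalElasticSol P B X0 (ξ κ) α (Λ κ)) :
    (∀ t : ℝ, 0 ≤ t → ∀ κ₁ κ₂ : ℝ, 0 < κ₁ → κ₁ ≤ κ₂ → Λ κ₁ t ≤ Λ κ₂ t) ∧
      ∀ t : ℝ, 0 ≤ t →
        Filter.Tendsto (fun κ : ℝ => Λ κ t) (nhdsWithin 0 (Set.Ioi 0)) (nhds 0) := by
  have hBcont : ∀ ω, Continuous fun s => B s ω := hB.2.1
  have hBmeas : ∀ s, Measurable (B s) := hB.2.2.1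
  constructor
  · -- monotonicity in κ via the least fixed point of the κ₁-operator
    intro t ht κ₁ κ₂ hκ₁ hκle
    have hκ₂ : 0 < κ₂ := lt_of_lt_of_le hκ₁ hκle
    obtain ⟨⟨⟨hm2, hrc2, hneg2, hle2⟩, hsol2⟩, -⟩ := hmin κ₂ hκ₂
    have hΛ20 : ∀ s, 0 ≤ Λ κ₂ s := S13.lossFn_nonneg' hm2 hneg2
    have hξm : Measurable (ξ κ₁) := (hξ κ₁ hκ₁).1
    haveI : Fact ((0:ℝ) ≤ 1) := ⟨zero_le_one⟩
    set Γ : (ℝ → ↥(Set.Icc (0:ℝ) 1)) →o (ℝ → ↥(Set.Icc (0:ℝ) 1)) :=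
      { toFun := fun L u =>
          ⟨(P {ω | elasticTau B X0 (ξ κ₁) α (fun s => ((L s : ℝ))) ω ≤ (u : EReal)}).toReal,
            ENNReal.toReal_nonneg,
            by simpa using ENNReal.toReal_mono ENNReal.one_ne_top prob_le_one⟩,
        monotone' := by
          intro L1 L2 h12 u
          have hmm :
              (P {ω | elasticTau B X0 (ξ κ₁) α (fun s => ((L1 s : ℝ))) ω ≤ (u : EReal)}).toReal
                ≤ (P {ω | elasticTau B X0 (ξ κ₁) α
                    (fun s => ((L2 s : ℝ))) ω ≤ (u : EReal)}).toReal := by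
            refine ENNReal.toReal_mono (measure_ne_top _ _) (measure_mono fun ω h => ?_)
            have h' : elasticTau B X0 (ξ κ₁) α (fun s => ((L1 s : ℝ))) ω ≤ (u : EReal) := h
            show elasticTau B X0 (ξ κ₁) α (fun s => ((L2 s : ℝ))) ω ≤ (u : EReal)
            refine le_trans ?_ h'
            exact S13.tau_anti (continuous_const.add (hBcont ω)) hα.le
              (fun s => (L2 s).2.1) (fun s => (L2 s).2.2) (fun s => h12 s) (ξ κ₁ ω)
          exact Subtype.coe_le_coe.mp hmm }
      with hΓdef
    set Λstar : ℝ → ↥(Set.Icc (0:ℝ) 1) := OrderHom.lfp Γ with hΛstar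
    have hfix : Γ Λstar = Λstar := OrderHom.map_lfp Γ
    set ΛS : ℝ → ℝ := fun u => ((Λstar u : ℝ)) with hΛS
    have hSol : ∀ u : ℝ,
        ΛS u = (P {ω | elasticTau B X0 (ξ κ₁) α ΛS ω ≤ (u : EReal)}).toReal :=
      fun u => (congrArg Subtype.val (congrFun hfix u)).symm
    have hS0 : ∀ s, 0 ≤ ΛS s := fun s => (Λstar s).2.1
    have hS1 : ∀ s, ΛS s ≤ 1 := fun s => (Λstar s).2.2
    have hSmono : Monotone ΛS := by
      intro a b hab
      rw [hSol a, hSol b]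
      exact S13.Gamma_monoTime P (α := α) (B := B) (X0 := X0) (ξ' := ξ κ₁) (Λ := ΛS) hab
    have hSrc : ∀ u : ℝ, ContinuousWithinAt ΛS (Set.Ici u) u := by
      intro u
      have h := S13.Gamma_rc P hα.le hX0meas hBmeas hBcont hξm hSmono hS0 hS1 u
      exact h.congr (fun v _ => hSol v) (hSol u)
    have hSneg : ∀ u : ℝ, u < 0 → ΛS u = 0 := by
      intro u hu
      rw [hSol u]
      exact S13.Gamma_nonneg_zero P hu
    have hElastic : IsElasticSol P B X0 (ξ κ₁) α ΛS :=
      ⟨⟨hSmono, hSrc, hSneg, hS1⟩, fun u _ => hSol u⟩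
    have h1 : Λ κ₁ t ≤ ΛS t := (hmin κ₁ hκ₁).2 ΛS hElastic t ht
    set L2 : ℝ → ↥(Set.Icc (0:ℝ) 1) := fun s => ⟨Λ κ₂ s, hΛ20 s, hle2 s⟩ with hL2
    have hpre : Γ L2 ≤ L2 := by
      intro u
      refine Subtype.coe_le_coe.mp ?_
      show (P {ω | elasticTau B X0 (ξ κ₁) α (fun s => ((L2 s : ℝ))) ω ≤ (u : EReal)}).toReal
        ≤ Λ κ₂ u
      rcases lt_or_ge u 0 with hu | hu
      · have e0 : {ω | elasticTau B X0 (ξ κ₁) α (fun s => ((L2 s : ℝ))) ω ≤ (u : EReal)}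
            = (∅ : Set Ω) :=
          eq_empty_of_forall_notMem fun ω h => S13.hitTime_neg hu h
        rw [e0, measure_empty, hneg2 u hu]
        simp
      · have e1 : {ω | elasticTau B X0 (ξ κ₁) α (fun s => ((L2 s : ℝ))) ω ≤ (u : EReal)}
            = {ω | ξ κ₁ ω ≤ reflTerm (fun s => X0 ω + B s ω - α * Λ κ₂ s) u} := by
          ext ω
          exact S13.tau_le_iff (continuous_const.add (hBcont ω)) hα.le hrc2 hΛ20 hle2 hu
        have e2 : {ω | elasticTau B X0 (ξ κ₂) α (Λ κ₂) ω ≤ (u : EReal)}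
            = {ω | ξ κ₂ ω ≤ reflTerm (fun s => X0 ω + B s ω - α * Λ κ₂ s) u} := by
          ext ω
          exact S13.tau_le_iff (continuous_const.add (hBcont ω)) hα.le hrc2 hΛ20 hle2 hu
        have key : P {ω | elasticTau B X0 (ξ κ₁) α (fun s => ((L2 s : ℝ))) ω ≤ (u : EReal)}
            ≤ P {ω | elasticTau B X0 (ξ κ₂) α (Λ κ₂) ω ≤ (u : EReal)} := by
          rw [e1, e2]
          exact S13.measure_xi_le_mono P hα.le hκ₁ hκle hBmeas hBcont hX0meas
            (hξ κ₁ hκ₁) (hξ κ₂ hκ₂) (hindepX0ξ κ₁ hκ₁) (hindepX0ξ κ₂ hκ₂)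
            (hindepB κ₁ hκ₁) (hindepB κ₂ hκ₂) hm2 hΛ20 hle2 hu
        have h3 := ENNReal.toReal_mono (measure_ne_top _ _) key
        exact h3.trans (le_of_eq (hsol2 u hu).symm)
    have h2 : ΛS t ≤ Λ κ₂ t := by
      have hle := OrderHom.lfp_le Γ hpre
      exact Subtype.coe_le_coe.mpr (hle t)
    linarith
  · -- convergence to 0 as κ → 0⁺
    intro t ht
    rw [Metric.tendsto_nhdsWithin_nhds]
    intro ε hε
    set W : Ω → ℝ := fun ω => reflTerm (fun s => X0 ω + B s ω - α * 1) (t + 1) with hWdef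
    have hWmeas : Measurable W := by
      refine measurable_const.max (Measurable.neg ?_)
      exact S13.meas_runMin hα.le hX0meas hBmeas hBcont
        (monotone_const : Monotone fun _ : ℝ => (1:ℝ)) (fun _ => zero_le_one)
        (fun _ => le_rfl) (by linarith : (0:ℝ) ≤ t + 1)
    set A : ℕ → Set Ω := fun n => {ω | (n : ℝ) < W ω} with hAdef
    have hAmeas : ∀ n, MeasurableSet (A n) := fun n =>
      measurableSet_lt measurable_const hWmeas
    have hAanti : Antitone A := by
      intro n m hnm ω hω
      have : (n : ℝ) ≤ (m : ℝ) := by exact_mod_cast hnm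
      exact lt_of_le_of_lt this hω
    have hIA : ⋂ n, A n = (∅ : Set Ω) := by
      refine eq_empty_of_forall_notMem fun ω h => ?_
      obtain ⟨n, hn⟩ := exists_nat_ge (W ω)
      exact absurd (Set.mem_iInter.mp h n) (not_lt.mpr hn)
    have htd : Tendsto (fun n => P (A n)) atTop (𝓝 0) := by
      have := tendsto_measure_iInter_atTop (μ := P) (s := A)
        (fun n => (hAmeas n).nullMeasurableSet) hAanti ⟨0, measure_ne_top _ _⟩
      rwa [hIA, measure_empty] at this
    have hev : ∀ᶠ n in atTop, P (A n) < ENNReal.ofReal (ε / 2) :=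
      htd.eventually_lt_const (ENNReal.ofReal_pos.mpr (by linarith))
    obtain ⟨n, hn⟩ := hev.exists
    refine ⟨ε / (2 * (n + 1)), by positivity, fun κ hκIoi hdist => ?_⟩
    have hκ : 0 < κ := hκIoi
    obtain ⟨⟨⟨hmκ, hrcκ, hnegκ, hleκ⟩, hsolκ⟩, -⟩ := hmin κ hκ
    have hΛκ0 : ∀ s, 0 ≤ Λ κ s := S13.lossFn_nonneg' hmκ hnegκ
    have hval : Λ κ t = (P {ω | elasticTau B X0 (ξ κ) α (Λ κ) ω ≤ (t : EReal)}).toReal :=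
      hsolκ t ht
    have hincl : {ω | elasticTau B X0 (ξ κ) α (Λ κ) ω ≤ (t : EReal)}
        ⊆ {ω | ξ κ ω ≤ (n : ℝ)} ∪ A n := by
      intro ω h
      have h' : hitTime (reflTerm fun s => X0 ω + B s ω - α * Λ κ s) (ξ κ ω)
          ≤ (t : EReal) := h
      obtain ⟨u, hu0, hxu, hur⟩ := S13.exists_of_hitTime_le h' (lt_add_one t)
      have hg : Continuous fun s => X0 ω + B s ω := continuous_const.add (hBcont ω)
      have hb1 : BddBelow ((fun s => X0 ω + B s ω - α * 1) '' Set.Icc 0 u) :=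
        S13.bddBelow_Y hg hα.le (Λ := fun _ => (1:ℝ)) (fun _ => zero_le_one)
          (fun _ => le_rfl) u
      have hbT : BddBelow ((fun s => X0 ω + B s ω - α * 1) '' Set.Icc 0 (t + 1)) :=
        S13.bddBelow_Y hg hα.le (Λ := fun _ => (1:ℝ)) (fun _ => zero_le_one)
          (fun _ => le_rfl) (t + 1)
      have step1 : ξ κ ω ≤ reflTerm (fun s => X0 ω + B s ω - α * 1) u := by
        refine le_trans hxu (S13.reflTerm_anti_fn hu0 hb1 fun s => ?_)
        have := hleκ s
        nlinarith
      have step2 : ξ κ ω ≤ W ω :=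
        le_trans step1 (S13.reflTerm_mono_time hu0 (le_of_lt hur) hbT)
      rcases le_or_gt (ξ κ ω) (n : ℝ) with h'' | h''
      · exact Or.inl h''
      · exact Or.inr (lt_of_lt_of_le h'' step2)
    have hP : P {ω | elasticTau B X0 (ξ κ) α (Λ κ) ω ≤ (t : EReal)}
        ≤ P {ω | ξ κ ω ≤ (n : ℝ)} + P (A n) :=
      le_trans (measure_mono hincl) (measure_union_le _ _)
    have hξn : (P {ω | ξ κ ω ≤ (n : ℝ)}).toReal ≤ κ * n := by
      have hmeas : MeasurableSet {ω | (n : ℝ) < ξ κ ω} :=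
        measurableSet_lt measurable_const (hξ κ hκ).1
      have hcompl : {ω | ξ κ ω ≤ (n : ℝ)} = {ω | (n : ℝ) < ξ κ ω}ᶜ := by
        ext ω; simp [not_lt]
      rw [hcompl, measure_compl hmeas (measure_ne_top _ _), measure_univ,
        (hξ κ hκ).2 n (Nat.cast_nonneg n)]
      have hexp1 : Real.exp (-κ * n) ≤ 1 := by
        rw [show (1:ℝ) = Real.exp 0 from (Real.exp_zero).symm]
        apply Real.exp_le_exp.mpr
        have : (0:ℝ) ≤ κ * n := by positivity
        linarith
      rw [ENNReal.toReal_sub_of_le (ENNReal.ofReal_le_one.mpr hexp1) ENNReal.one_ne_top,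
        ENNReal.toReal_one, ENNReal.toReal_ofReal (Real.exp_nonneg _)]
      have := Real.add_one_le_exp (-κ * n)
      linarith
    have hAn : (P (A n)).toReal < ε / 2 := by
      have h2 : (P (A n)).toReal < (ENNReal.ofReal (ε / 2)).toReal :=
        (ENNReal.toReal_lt_toReal (measure_ne_top _ _) ENNReal.ofReal_ne_top).mpr hn
      rwa [ENNReal.toReal_ofReal (by linarith)] at h2
    have hsum : Λ κ t ≤ (P {ω | ξ κ ω ≤ (n : ℝ)}).toReal + (P (A n)).toReal := by
      rw [hval, ← ENNReal.toReal_add (measure_ne_top _ _) (measure_ne_top _ _)]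
      exact ENNReal.toReal_mono
        (ENNReal.add_ne_top.mpr ⟨measure_ne_top _ _, measure_ne_top _ _⟩) hP
    have hκn : κ * n < ε / 2 := by
      rw [Real.dist_eq, sub_zero, abs_of_pos hκ] at hdist
      have h1 : κ * n ≤ κ * (n + 1) := by nlinarith
      have h2 : κ * (n + 1) < ε / (2 * (n + 1)) * (n + 1) := by
        apply mul_lt_mul_of_pos_right hdist
        positivity
      have h3 : ε / (2 * (n + 1)) * (n + 1) = ε / 2 := by
        field_simp
      linarith
    rw [Real.dist_eq, sub_zero, abs_of_nonneg (S13.lossFn_nonneg' hmκ hnegκ t)]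
    linarith

end
end
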